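/- arXiv:1512.06962 — 5 statements merged into one kernel-verified Lean document; each statement's English description precedes it below -/
import Mathlib

section
/- Suppose M₁ and M₂ are B(H)-valued functions analytic on a punctured disk D(z₀;ε₀)\{z₀}, each finitely meromorphic at z₀ (their principal parts at z₀ are finite Laurent sums with finite-rank coefficients). Then the products M₁M₂ and M₂M₁ are finitely meromorphic at z₀, and for sufficiently small ε > 0 the contour integrals ∮_{C(z₀;ε)} M₁(ζ)M₂(ζ) dζ and ∮_{C(z₀;ε)} M₂(ζ)M₁(ζ) dζ are finite-rank operators with equal traces. -/
open scoped Real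

variable {H : Type*} [NormedAddCommGroup H] [InnerProductSpace ℂ H] [CompleteSpace H]

/-- A bounded operator has finite rank. -/
def FinRank (T : H →L[ℂ] H) : Prop :=
  FiniteDimensional ℂ (LinearMap.range (T : H →ₗ[ℂ] H))

/-- `P` is the principal part at `z₀` of the `B(H)`-valued function `M`, on a disk of
radius `ε₀`: `P` is a finite Laurent sum `∑_{k=1}^{N} (z - z₀)^{-k} • A_k` with
finite-rank coefficients `A_k`, and `M - P` extends to a function analytic on the whole
disk.  In particular `M` is finitely meromorphic at `z₀`. -/
def IsPrincipalPartAt (M : ℂ → H →L[ℂ] H) (z₀ : ℂ) (ε₀ : ℝ) (P : ℂ → H →L[ℂ] H) : Prop :=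
  ∃ (N : ℕ) (A : ℕ → H →L[ℂ] H) (g : ℂ → H →L[ℂ] H),
    (∀ k, k < N → FinRank (A k)) ∧
    AnalyticOnNhd ℂ g (Metric.ball z₀ ε₀) ∧
    (∀ z, P z = ∑ k ∈ Finset.range N, ((z - z₀) ^ (-(k + 1 : ℤ))) • A k) ∧
    (∀ z ∈ Metric.ball z₀ ε₀ \ {z₀}, M z = g z + P z)

/-- `M` is finitely meromorphic at `z₀` (on the disk of radius `ε₀`): it is analytic on
the punctured disk and its principal part at `z₀` is a finite Laurent sum with
finite-rank coefficients. -/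
def FinitelyMeromorphicAt (M : ℂ → H →L[ℂ] H) (z₀ : ℂ) (ε₀ : ℝ) : Prop :=
  ∃ P : ℂ → H →L[ℂ] H, IsPrincipalPartAt M z₀ ε₀ P

open Metric

namespace FMaux

set_option linter.unusedSectionVars false

lemma finRank_of_le {T : H →L[ℂ] H} {S : Submodule ℂ H} (hS : FiniteDimensional ℂ S)
    (h : LinearMap.range (T : H →ₗ[ℂ] H) ≤ S) : FinRank T :=
  Submodule.finiteDimensional_of_le h

lemma finRank_zero : FinRank (0 : H →L[ℂ] H) := by
  refine finRank_of_le (S := (⊥ : Submodule ℂ H)) inferInstance ?_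
  rintro x ⟨y, rfl⟩; simp

lemma finRank_add {S T : H →L[ℂ] H} (hS : FinRank S) (hT : FinRank T) : FinRank (S + T) := by
  have hS' : FiniteDimensional ℂ (LinearMap.range (S : H →ₗ[ℂ] H)) := hS
  have hT' : FiniteDimensional ℂ (LinearMap.range (T : H →ₗ[ℂ] H)) := hT
  refine finRank_of_le (S := LinearMap.range (S : H →ₗ[ℂ] H) ⊔ LinearMap.range (T : H →ₗ[ℂ] H))
    (Submodule.finiteDimensional_sup _ _) ?_
  rintro x ⟨y, rfl⟩
  exact Submodule.add_mem_sup ⟨y, rfl⟩ ⟨y, rfl⟩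

lemma finRank_smul (c : ℂ) {T : H →L[ℂ] H} (hT : FinRank T) : FinRank (c • T) := by
  refine finRank_of_le (S := LinearMap.range (T : H →ₗ[ℂ] H)) hT ?_
  rintro x ⟨y, rfl⟩
  exact ⟨c • y, by simp [map_smul]⟩

lemma finRank_sum {ι : Type*} (s : Finset ι) (f : ι → H →L[ℂ] H)
    (hf : ∀ i ∈ s, FinRank (f i)) : FinRank (∑ i ∈ s, f i) := by
  classical
  induction s using Finset.induction_on with
  | empty => simpa using finRank_zero
  | insert a s hx ih =>
      rw [Finset.sum_insert hx]
      exact finRank_add (hf a (Finset.mem_insert_self a s))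
        (ih fun i hi => hf i (Finset.mem_insert_of_mem hi))

lemma finRank_mul_left {S : H →L[ℂ] H} (T : H →L[ℂ] H) (hS : FinRank S) :
    FinRank (S * T) := by
  refine finRank_of_le (S := LinearMap.range (S : H →ₗ[ℂ] H)) hS ?_
  rintro x ⟨y, rfl⟩
  exact ⟨T y, rfl⟩

lemma finRank_mul_right (S : H →L[ℂ] H) {T : H →L[ℂ] H} (hT : FinRank T) :
    FinRank (S * T) := by
  have hT' : FiniteDimensional ℂ (LinearMap.range (T : H →ₗ[ℂ] H)) := hT
  have hfin : FiniteDimensional ℂ (Submodule.map (↑S : H →ₗ[ℂ] H) (LinearMap.range (T : H →ₗ[ℂ] H))) :=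
    Module.Finite.map (LinearMap.range (T : H →ₗ[ℂ] H)) (↑S : H →ₗ[ℂ] H)
  refine finRank_of_le hfin ?_
  rintro x ⟨y, rfl⟩
  exact ⟨T y, ⟨y, rfl⟩, rfl⟩

section Taylor
variable {E : Type*} [NormedAddCommGroup E] [NormedSpace ℂ E] {z₀ : ℂ} {ε₀ : ℝ}

lemma analyticOnNhd_dslope {g : ℂ → E} (hg : AnalyticOnNhd ℂ g (ball z₀ ε₀)) :
    AnalyticOnNhd ℂ (dslope g z₀) (ball z₀ ε₀) := by
  intro z hz
  rcases eq_or_ne z z₀ with rfl | hne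
  · obtain ⟨p, hp⟩ := hg z hz
    exact ⟨_, hp.has_fpower_series_dslope_fslope⟩
  · have h1 : AnalyticAt ℂ (fun w => (w - z₀)⁻¹ • (g w - g z₀)) z := by
      refine AnalyticAt.smul ?_ ?_
      · exact ((analyticAt_id.sub analyticAt_const).inv (sub_ne_zero.2 hne))
      · exact (hg z hz).sub analyticAt_const
    refine h1.congr ?_
    have : ∀ᶠ w in nhds z, w ≠ z₀ := eventually_ne_nhds hne
    filter_upwards [this] with w hw
    rw [dslope_of_ne _ hw]
    rfl

lemma taylor_split {g : ℂ → E} (hg : AnalyticOnNhd ℂ g (ball z₀ ε₀)) (n : ℕ) :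
    ∃ (c : ℕ → E) (h : ℂ → E), AnalyticOnNhd ℂ h (ball z₀ ε₀) ∧
      ∀ z, g z = (∑ j ∈ Finset.range n, (z - z₀) ^ j • c j) + (z - z₀) ^ n • h z := by
  induction n with
  | zero => exact ⟨fun _ => 0, g, hg, fun z => by simp⟩
  | succ n ih =>
      obtain ⟨c, h, hh, heq⟩ := ih
      refine ⟨fun j => if j = n then h z₀ else c j, dslope h z₀, analyticOnNhd_dslope hh, ?_⟩
      intro z
      have key2 : (z - z₀) ^ n • h z
          = (z - z₀) ^ n • h z₀ + (z - z₀) ^ (n + 1) • dslope h z₀ z := by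
        rw [pow_succ, mul_smul, sub_smul_dslope, smul_sub]
        abel
      have hrw : ∀ j ∈ Finset.range n,
          (z - z₀) ^ j • (if j = n then h z₀ else c j) = (z - z₀) ^ j • c j := by
        intro j hj
        rw [if_neg (Finset.mem_range.1 hj).ne]
      rw [heq z, key2, Finset.sum_range_succ, Finset.sum_congr rfl hrw]
      beta_reduce
      rw [if_pos rfl]
      abel

end Taylor

variable (z₀ : ℂ) (ε₀ : ℝ)

/-- Normalized finitely-meromorphic data with residue `R`. -/
def HasFM (M : ℂ → H →L[ℂ] H) (R : H →L[ℂ] H) : Prop :=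
  ∃ (N : ℕ) (A : ℕ → H →L[ℂ] H) (g : ℂ → H →L[ℂ] H),
    (∀ k, FinRank (A k)) ∧ (∀ k, N ≤ k → A k = 0) ∧ A 0 = R ∧
    AnalyticOnNhd ℂ g (Metric.ball z₀ ε₀) ∧
    ∀ z ∈ Metric.ball z₀ ε₀ \ {z₀},
      M z = g z + ∑ k ∈ Finset.range N, ((z - z₀) ^ (-(k + 1 : ℤ))) • A k

variable {z₀ ε₀}

lemma hasFM_congr {M M' : ℂ → H →L[ℂ] H} {R : H →L[ℂ] H}
    (h : HasFM z₀ ε₀ M' R) (he : ∀ z ∈ Metric.ball z₀ ε₀ \ {z₀}, M z = M' z) :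
    HasFM z₀ ε₀ M R := by
  obtain ⟨N, A, g, h1, h2, h3, h4, h5⟩ := h
  exact ⟨N, A, g, h1, h2, h3, h4, fun z hz => (he z hz).trans (h5 z hz)⟩

lemma hasFM_analytic {g : ℂ → H →L[ℂ] H} (hg : AnalyticOnNhd ℂ g (Metric.ball z₀ ε₀)) :
    HasFM z₀ ε₀ g 0 :=
  ⟨0, fun _ => 0, g, fun _ => by
      refine Submodule.finiteDimensional_of_le (S₂ := (⊥ : Submodule ℂ H)) ?_
      rintro x ⟨y, rfl⟩; simp,
    fun _ _ => rfl, rfl, hg, fun z _ => by simp⟩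

lemma sum_pad {A : ℕ → H →L[ℂ] H} {N N' : ℕ} (h : N ≤ N') (hA : ∀ k, N ≤ k → A k = 0)
    (x : ℂ) :
    ∑ k ∈ Finset.range N', (x ^ (-(k + 1 : ℤ))) • A k
      = ∑ k ∈ Finset.range N, (x ^ (-(k + 1 : ℤ))) • A k := by
  refine (Finset.sum_subset (Finset.range_subset_range.2 h) ?_).symm
  intro k _ hk
  rw [hA k (le_of_not_gt (fun hlt => hk (Finset.mem_range.2 hlt))), smul_zero]

lemma hasFM_add {M M' : ℂ → H →L[ℂ] H} {R R' : H →L[ℂ] H}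
    (h : HasFM z₀ ε₀ M R) (h' : HasFM z₀ ε₀ M' R') :
    HasFM z₀ ε₀ (fun z => M z + M' z) (R + R') := by
  obtain ⟨N, A, g, h1, h2, h3, h4, h5⟩ := h
  obtain ⟨N', A', g', h1', h2', h3', h4', h5'⟩ := h'
  refine ⟨max N N', fun k => A k + A' k, fun z => g z + g' z, ?_, ?_, ?_, h4.add h4', ?_⟩
  · exact fun k => finRank_add (h1 k) (h1' k)
  · intro k hk
    show A k + A' k = 0
    rw [h2 k (le_trans (le_max_left _ _) hk), h2' k (le_trans (le_max_right _ _) hk), add_zero]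
  · show A 0 + A' 0 = R + R'
    rw [h3, h3']
  · intro z hz
    show M z + M' z = (g z + g' z) + _
    rw [h5 z hz, h5' z hz]
    have : ∑ k ∈ Finset.range (max N N'), ((z - z₀) ^ (-(k + 1 : ℤ))) • (A k + A' k)
        = (∑ k ∈ Finset.range N, ((z - z₀) ^ (-(k + 1 : ℤ))) • A k)
          + ∑ k ∈ Finset.range N', ((z - z₀) ^ (-(k + 1 : ℤ))) • A' k := by
      rw [← sum_pad (le_max_left N N') h2, ← sum_pad (le_max_right N N') h2',
        ← Finset.sum_add_distrib]
      exact Finset.sum_congr rfl fun k _ => smul_add _ _ _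
    rw [this]
    abel

lemma hasFM_sum {ι : Type*} (s : Finset ι) (F : ι → ℂ → H →L[ℂ] H) (R : ι → H →L[ℂ] H)
    (h : ∀ i ∈ s, HasFM z₀ ε₀ (F i) (R i)) :
    HasFM z₀ ε₀ (fun z => ∑ i ∈ s, F i z) (∑ i ∈ s, R i) := by
  classical
  induction s using Finset.induction_on with
  | empty => simpa using hasFM_analytic analyticOnNhd_const
  | insert a s hx ih =>
      simp only [Finset.sum_insert hx]
      exact hasFM_add (h a (Finset.mem_insert_self a s))
        (ih fun i hi => h i (Finset.mem_insert_of_mem hi))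

lemma key_reindex {z z₀ : ℂ} (hw : z - z₀ ≠ 0) (k : ℕ) (T : ℕ → H →L[ℂ] H) :
    ∑ j ∈ Finset.range (k + 1), ((z - z₀) ^ (-(k + 1 : ℤ))) • (((z - z₀) ^ j) • T j)
      = ∑ m ∈ Finset.range (k + 1), ((z - z₀) ^ (-(m + 1 : ℤ))) • T (k - m) := by
  have hL : ∀ j, ((z - z₀) ^ (-(k + 1 : ℤ))) • (((z - z₀) ^ j) • T j)
      = ((z - z₀) ^ ((j : ℤ) - (k + 1))) • T j := by
    intro j
    have he : (-(k + 1 : ℤ) + (j : ℤ)) = (j : ℤ) - (k + 1) := by ring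
    rw [smul_smul, ← zpow_natCast (z - z₀) j, ← zpow_add₀ hw, he]
  calc ∑ j ∈ Finset.range (k + 1), ((z - z₀) ^ (-(k + 1 : ℤ))) • (((z - z₀) ^ j) • T j)
      = ∑ j ∈ Finset.range (k + 1), ((z - z₀) ^ ((j : ℤ) - (k + 1))) • T j := by
        exact Finset.sum_congr rfl fun j _ => hL j
    _ = ∑ m ∈ Finset.range (k + 1),
          ((z - z₀) ^ ((((k + 1 - 1 - m : ℕ)) : ℤ) - (k + 1))) • T (k + 1 - 1 - m) := by
        exact (Finset.sum_range_reflect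
          (fun j => ((z - z₀) ^ ((j : ℤ) - (k + 1))) • T j) (k + 1)).symm
    _ = ∑ m ∈ Finset.range (k + 1), ((z - z₀) ^ (-(m + 1 : ℤ))) • T (k - m) := by
        refine Finset.sum_congr rfl fun m hm => ?_
        have hm' : m ≤ k := Nat.lt_succ_iff.1 (Finset.mem_range.1 hm)
        have h1 : (k + 1 - 1 - m : ℕ) = k - m := by omega
        have h2 : (((k - m : ℕ)) : ℤ) - (k + 1) = -(m + 1 : ℤ) := by
          rw [Nat.cast_sub hm']
          push_cast
          ring
        rw [h1, h2]

lemma exists_laurent {g : ℂ → H →L[ℂ] H} (hg : AnalyticOnNhd ℂ g (Metric.ball z₀ ε₀)) (k : ℕ) :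
    ∃ c : H →L[ℂ] H, ∀ A : H →L[ℂ] H, FinRank A →
      HasFM z₀ ε₀ (fun z => ((z - z₀) ^ (-(k + 1 : ℤ))) • (g z * A)) (c * A) ∧
      HasFM z₀ ε₀ (fun z => ((z - z₀) ^ (-(k + 1 : ℤ))) • (A * g z)) (A * c) := by
  obtain ⟨c', h, hh, heq⟩ := taylor_split hg (k + 1)
  have hz1 : ∀ z : ℂ, z - z₀ ≠ 0 → ∀ T : H →L[ℂ] H,
      ((z - z₀) ^ (-(k + 1 : ℤ))) • ((z - z₀) ^ (k + 1) • T) = T := by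
    intro z hw T
    rw [smul_smul, ← zpow_natCast (z - z₀) (k + 1), ← zpow_add₀ hw]
    have h0 : (-(k + 1 : ℤ) + ((k + 1 : ℕ) : ℤ)) = 0 := by push_cast; ring
    rw [h0, zpow_zero, one_smul]
  refine ⟨c' k, fun A hA => ⟨?_, ?_⟩⟩
  · refine ⟨k + 1, fun m => if m < k + 1 then c' (k - m) * A else 0, fun z => h z * A,
      ?_, ?_, ?_, hh.mul analyticOnNhd_const, ?_⟩
    · intro m
      beta_reduce
      by_cases hm : m < k + 1
      · rw [if_pos hm]; exact finRank_mul_right _ hA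
      · rw [if_neg hm]; exact finRank_zero
    · intro m hm
      beta_reduce
      rw [if_neg (by omega)]
    · show (if 0 < k + 1 then c' (k - 0) * A else 0) = c' k * A
      rw [if_pos (by omega)]
      norm_num
    · intro z hz
      have hw : z - z₀ ≠ 0 := sub_ne_zero.2 hz.2
      show ((z - z₀) ^ (-(k + 1 : ℤ))) • (g z * A) = h z * A + _
      have : ∑ m ∈ Finset.range (k + 1),
          ((z - z₀) ^ (-(m + 1 : ℤ))) • (if m < k + 1 then c' (k - m) * A else 0)
          = ∑ m ∈ Finset.range (k + 1), ((z - z₀) ^ (-(m + 1 : ℤ))) • (c' (k - m) * A) :=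
        Finset.sum_congr rfl fun m hm => by rw [if_pos (Finset.mem_range.1 hm)]
      rw [this, ← key_reindex hw k (fun j => c' j * A)]
      rw [heq z, add_mul, Finset.sum_mul, smul_add, Finset.smul_sum]
      have h2 : ∀ j, ((z - z₀) ^ j • c' j) * A = (z - z₀) ^ j • (c' j * A) :=
        fun j => smul_mul_assoc _ _ _
      have h3 : ((z - z₀) ^ (k + 1) • h z) * A = (z - z₀) ^ (k + 1) • (h z * A) :=
        smul_mul_assoc _ _ _
      simp only [h2, h3]
      rw [hz1 z hw]
      abel
  · refine ⟨k + 1, fun m => if m < k + 1 then A * c' (k - m) else 0, fun z => A * h z,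
      ?_, ?_, ?_, analyticOnNhd_const.mul hh, ?_⟩
    · intro m
      beta_reduce
      by_cases hm : m < k + 1
      · rw [if_pos hm]; exact finRank_mul_left _ hA
      · rw [if_neg hm]; exact finRank_zero
    · intro m hm
      beta_reduce
      rw [if_neg (by omega)]
    · show (if 0 < k + 1 then A * c' (k - 0) else 0) = A * c' k
      rw [if_pos (by omega)]
      norm_num
    · intro z hz
      have hw : z - z₀ ≠ 0 := sub_ne_zero.2 hz.2
      show ((z - z₀) ^ (-(k + 1 : ℤ))) • (A * g z) = A * h z + _
      have : ∑ m ∈ Finset.range (k + 1),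
          ((z - z₀) ^ (-(m + 1 : ℤ))) • (if m < k + 1 then A * c' (k - m) else 0)
          = ∑ m ∈ Finset.range (k + 1), ((z - z₀) ^ (-(m + 1 : ℤ))) • (A * c' (k - m)) :=
        Finset.sum_congr rfl fun m hm => by rw [if_pos (Finset.mem_range.1 hm)]
      rw [this, ← key_reindex hw k (fun j => A * c' j)]
      rw [heq z, mul_add, Finset.mul_sum, smul_add, Finset.smul_sum]
      have h2 : ∀ j, A * ((z - z₀) ^ j • c' j) = (z - z₀) ^ j • (A * c' j) :=
        fun j => mul_smul_comm _ _ _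
      have h3 : A * ((z - z₀) ^ (k + 1) • h z) = (z - z₀) ^ (k + 1) • (A * h z) :=
        mul_smul_comm _ _ _
      simp only [h2, h3]
      rw [hz1 z hw]
      abel

lemma hasFM_laurent_laurent {A A' : H →L[ℂ] H} (hA : FinRank A) (hA' : FinRank A')
    (k l : ℕ) :
    HasFM z₀ ε₀
      (fun z => (((z - z₀) ^ (-(k + 1 : ℤ))) • A) * (((z - z₀) ^ (-(l + 1 : ℤ))) • A')) 0 := by
  refine ⟨k + l + 2, fun m => if m = k + l + 1 then A * A' else 0, fun _ => 0,
    ?_, ?_, ?_, analyticOnNhd_const, ?_⟩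
  · intro m
    beta_reduce
    by_cases hm : m = k + l + 1
    · rw [if_pos hm]; exact finRank_mul_left _ hA
    · rw [if_neg hm]; exact finRank_zero
  · intro m hm
    beta_reduce
    rw [if_neg (by omega)]
  · show (if (0 : ℕ) = k + l + 1 then A * A' else 0) = 0
    rw [if_neg (by omega)]
  · intro z hz
    have hw : z - z₀ ≠ 0 := sub_ne_zero.2 hz.2
    show (((z - z₀) ^ (-(k + 1 : ℤ))) • A) * (((z - z₀) ^ (-(l + 1 : ℤ))) • A')
      = 0 + _
    rw [zero_add]
    have hmem : k + l + 1 ∈ Finset.range (k + l + 2) := Finset.mem_range.2 (by omega)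
    have hsum : ∑ m ∈ Finset.range (k + l + 2),
        ((z - z₀) ^ (-(m + 1 : ℤ))) • (if m = k + l + 1 then A * A' else 0)
        = ((z - z₀) ^ (-((k + l + 1 : ℕ) + 1 : ℤ))) • (A * A') := by
      have : ∀ m ∈ Finset.range (k + l + 2),
          ((z - z₀) ^ (-(m + 1 : ℤ))) • (if m = k + l + 1 then A * A' else 0)
          = (if m = k + l + 1 then ((z - z₀) ^ (-(m + 1 : ℤ))) • (A * A') else 0) := by
        intro m _
        by_cases hm : m = k + l + 1
        · rw [if_pos hm, if_pos hm]
        · rw [if_neg hm, if_neg hm, smul_zero]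
      rw [Finset.sum_congr rfl this, Finset.sum_ite_eq' (Finset.range (k + l + 2)) (k + l + 1)]
      rw [if_pos hmem]
    calc ((z - z₀) ^ (-(k + 1 : ℤ)) • A) * ((z - z₀) ^ (-(l + 1 : ℤ)) • A')
        = ((z - z₀) ^ (-(k + 1 : ℤ)) * (z - z₀) ^ (-(l + 1 : ℤ))) • (A * A') :=
          smul_mul_smul_comm _ _ _ _
      _ = ((z - z₀) ^ (-((k + l + 1 : ℕ) + 1 : ℤ))) • (A * A') := by
          have he : (-(k + 1 : ℤ)) + (-(l + 1 : ℤ)) = -((k + l + 1 : ℕ) + 1 : ℤ) := by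
            push_cast; ring
          rw [← zpow_add₀ hw, he]
      _ = ∑ m ∈ Finset.range (k + l + 2),
            ((z - z₀) ^ (-(m + 1 : ℤ))) • (if m = k + l + 1 then A * A' else 0) := hsum.symm
      _ = ∑ m ∈ Finset.range (k + l + 2),
            ((z - z₀) ^ (-(m + 1 : ℤ))) • ((fun m => if m = k + l + 1 then A * A' else 0) m) :=
          rfl

lemma circleIntegral_add' {E : Type*} [NormedAddCommGroup E] [NormedSpace ℂ E] {f g : ℂ → E}
    {c : ℂ} {R : ℝ} (hf : CircleIntegrable f c R) (hg : CircleIntegrable g c R) :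
    (∮ z in C(c, R), (f z + g z)) = (∮ z in C(c, R), f z) + ∮ z in C(c, R), g z := by
  simp only [circleIntegral, smul_add, intervalIntegral.integral_add hf.out hg.out]

lemma circleIntegral_finset_sum {E : Type*} [NormedAddCommGroup E] [NormedSpace ℂ E]
    {ι : Type*} (s : Finset ι) (f : ι → ℂ → E) {c : ℂ} {R : ℝ}
    (h : ∀ i ∈ s, CircleIntegrable (f i) c R) :
    (∮ z in C(c, R), ∑ i ∈ s, f i z) = ∑ i ∈ s, ∮ z in C(c, R), f i z := by
  simp only [circleIntegral, Finset.smul_sum]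
  exact intervalIntegral.integral_finset_sum fun i hi => (h i hi).out

lemma zpow_term_continuousOn {z₀ : ℂ} {ε : ℝ} (hε : 0 < ε) (n : ℤ) (A : H →L[ℂ] H) :
    ContinuousOn (fun z : ℂ => ((z - z₀) ^ n) • A) (sphere z₀ ε) := by
  refine ContinuousOn.fun_smul ?_ continuousOn_const
  refine (continuousOn_id.sub continuousOn_const).zpow₀ n fun z hz => Or.inl ?_
  have hne : z ≠ z₀ := by
    intro hzz
    rw [mem_sphere, hzz, dist_self] at hz
    exact absurd hz (ne_of_lt hε)
  exact sub_ne_zero.2 hne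

lemma hasFM_integral {M : ℂ → H →L[ℂ] H} {R : H →L[ℂ] H} (h : HasFM z₀ ε₀ M R)
    {ε : ℝ} (hε : 0 < ε) (hεε : ε < ε₀) :
    (∮ ζ in C(z₀, ε), M ζ) = ((2 * Real.pi * Complex.I : ℂ)) • R := by
  obtain ⟨N, A, g, h1, h2, h3, h4, h5⟩ := h
  have hsub : sphere z₀ ε ⊆ Metric.ball z₀ ε₀ \ {z₀} := by
    intro x hx
    rw [mem_sphere] at hx
    constructor
    · rw [mem_ball]; rw [hx]; exact hεε
    · intro hxx
      rw [Set.mem_singleton_iff] at hxx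
      rw [hxx, dist_self] at hx
      exact absurd hx (ne_of_lt hε)
  have hcb : closedBall z₀ ε ⊆ Metric.ball z₀ ε₀ :=
    (closedBall_subset_ball hεε)
  set P : ℂ → H →L[ℂ] H :=
    fun z => ∑ k ∈ Finset.range N, ((z - z₀) ^ (-(k + 1 : ℤ))) • A k with hP
  have hgint : CircleIntegrable g z₀ ε :=
    ((h4.continuousOn).mono (hsub.trans Set.diff_subset |>.trans (fun x hx => hx))
      |>.circleIntegrable hε.le)
  have htermcont : ∀ k : ℕ, ContinuousOn (fun z : ℂ => ((z - z₀) ^ (-(k + 1 : ℤ))) • A k)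
      (sphere z₀ ε) := fun k => zpow_term_continuousOn hε (-(k + 1 : ℤ)) (A k)
  have htermint : ∀ k ∈ Finset.range N,
      CircleIntegrable (fun z : ℂ => ((z - z₀) ^ (-(k + 1 : ℤ))) • A k) z₀ ε :=
    fun k _ => (htermcont k).circleIntegrable hε.le
  have hPcont : ContinuousOn P (sphere z₀ ε) := by
    rw [hP]
    exact continuousOn_finset_sum _ fun k _ => htermcont k
  have hPint : CircleIntegrable P z₀ ε := hPcont.circleIntegrable hε.le
  have hint : ∀ k : ℕ, (∮ ζ in C(z₀, ε), ((ζ - z₀) ^ (-(k + 1 : ℤ))) • A k)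
      = (if k = 0 then ((2 * Real.pi * Complex.I : ℂ)) else 0) • A k := by
    intro k
    rw [circleIntegral.integral_smul_const]
    congr 1
    by_cases hk : k = 0
    · subst hk
      rw [if_pos rfl]
      have he : ∀ ζ : ℂ, (ζ - z₀) ^ (-((0 : ℕ) + 1 : ℤ)) = (ζ - z₀)⁻¹ := by
        intro ζ
        norm_num
      rw [circleIntegral.integral_congr hε.le fun ζ _ => he ζ]
      exact circleIntegral.integral_sub_inv_of_mem_ball (mem_ball_self hε)
    · rw [if_neg hk]
      exact circleIntegral.integral_sub_zpow_of_ne (by omega) _ _ _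
  have hMP : (∮ ζ in C(z₀, ε), M ζ) = ∮ ζ in C(z₀, ε), (g ζ + P ζ) :=
    circleIntegral.integral_congr hε.le fun ζ hζ => h5 ζ (hsub hζ)
  have hg0 : (∮ ζ in C(z₀, ε), g ζ) = 0 := by
    refine Complex.circleIntegral_eq_zero_of_differentiable_on_off_countable hε.le
      Set.countable_empty (h4.continuousOn.mono hcb) ?_
    intro z hz
    exact (h4 z (hcb (ball_subset_closedBall hz.1))).differentiableAt
  rw [hMP, circleIntegral_add' hgint hPint, hg0, zero_add, hP,
    circleIntegral_finset_sum _ _ htermint]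
  have : ∑ k ∈ Finset.range N, (∮ ζ in C(z₀, ε), ((ζ - z₀) ^ (-(k + 1 : ℤ))) • A k)
      = ∑ k ∈ Finset.range N,
          (if k = 0 then ((2 * Real.pi * Complex.I : ℂ)) else 0) • A k :=
    Finset.sum_congr rfl fun k _ => hint k
  rw [this]
  rcases Nat.eq_zero_or_pos N with hN | hN
  · have hR : R = 0 := by rw [← h3, h2 0 (by omega)]
    rw [hN, hR]
    simp
  · rw [Finset.sum_eq_single_of_mem 0 (Finset.mem_range.2 hN)]
    · rw [if_pos rfl, h3]
    · intro k _ hk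
      rw [if_neg hk, zero_smul]

end FMaux

namespace FMaux

lemma hasFM_finitelyMeromorphic {M : ℂ → H →L[ℂ] H} {R : H →L[ℂ] H} {z₀ : ℂ} {ε₀ : ℝ}
    (h : HasFM z₀ ε₀ M R) : FinitelyMeromorphicAt M z₀ ε₀ := by
  obtain ⟨N, A, g, h1, h2, h3, h4, h5⟩ := h
  exact ⟨fun z => ∑ k ∈ Finset.range N, ((z - z₀) ^ (-(k + 1 : ℤ))) • A k,
    N, A, g, fun k _ => h1 k, h4, fun _ => rfl, h5⟩

end FMaux

open FMaux in
/-- If `M₁, M₂` are `B(H)`-valued functions, analytic on the punctured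
disk `D(z₀;ε₀) \ {z₀}` and finitely meromorphic at `z₀`, then `M₁M₂` and `M₂M₁` are
finitely meromorphic at `z₀`, and for `0 < ε < ε₀` the contour integrals
`∮_{C(z₀;ε)} M₁(ζ)M₂(ζ) dζ` and `∮_{C(z₀;ε)} M₂(ζ)M₁(ζ) dζ` are finite-rank operators
with equal traces. -/
theorem finitelyMeromorphic_mul (M₁ M₂ : ℂ → H →L[ℂ] H) (z₀ : ℂ) (ε₀ : ℝ) (hε₀ : 0 < ε₀)
    (hM₁ : AnalyticOnNhd ℂ M₁ (Metric.ball z₀ ε₀ \ {z₀}))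
    (hM₂ : AnalyticOnNhd ℂ M₂ (Metric.ball z₀ ε₀ \ {z₀}))
    (hm₁ : FinitelyMeromorphicAt M₁ z₀ ε₀)
    (hm₂ : FinitelyMeromorphicAt M₂ z₀ ε₀) :
    FinitelyMeromorphicAt (fun z => M₁ z ∘L M₂ z) z₀ ε₀ ∧
    FinitelyMeromorphicAt (fun z => M₂ z ∘L M₁ z) z₀ ε₀ ∧
    ∀ ε, 0 < ε → ε < ε₀ →
      FinRank (∮ ζ in C(z₀, ε), (M₁ ζ ∘L M₂ ζ)) ∧
      FinRank (∮ ζ in C(z₀, ε), (M₂ ζ ∘L M₁ ζ)) ∧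
      LinearMap.trace ℂ H
          (ContinuousLinearMap.toLinearMap (∮ ζ in C(z₀, ε), (M₁ ζ ∘L M₂ ζ)))
        = LinearMap.trace ℂ H
          (ContinuousLinearMap.toLinearMap (∮ ζ in C(z₀, ε), (M₂ ζ ∘L M₁ ζ))) := by
  classical
  obtain ⟨P₁, N₁, A₁, g₁, hA₁, hg₁, hP₁, he₁⟩ := hm₁
  obtain ⟨P₂, N₂, A₂, g₂, hA₂, hg₂, hP₂, he₂⟩ := hm₂
  set B₁ : ℕ → H →L[ℂ] H := fun k => if k < N₁ then A₁ k else 0 with hB₁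
  set B₂ : ℕ → H →L[ℂ] H := fun k => if k < N₂ then A₂ k else 0 with hB₂
  have hB₁fin : ∀ k, FinRank (B₁ k) := by
    intro k
    rw [hB₁]
    beta_reduce
    by_cases hk : k < N₁
    · rw [if_pos hk]; exact hA₁ k hk
    · rw [if_neg hk]; exact finRank_zero
  have hB₂fin : ∀ k, FinRank (B₂ k) := by
    intro k
    rw [hB₂]
    beta_reduce
    by_cases hk : k < N₂
    · rw [if_pos hk]; exact hA₂ k hk
    · rw [if_neg hk]; exact finRank_zero
  have he₁' : ∀ z ∈ Metric.ball z₀ ε₀ \ {z₀},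
      M₁ z = g₁ z + ∑ k ∈ Finset.range N₁, ((z - z₀) ^ (-(k + 1 : ℤ))) • B₁ k := by
    intro z hz
    rw [he₁ z hz, hP₁ z]
    congr 1
    refine Finset.sum_congr rfl fun k hk => ?_
    rw [hB₁]
    beta_reduce
    rw [if_pos (Finset.mem_range.1 hk)]
  have he₂' : ∀ z ∈ Metric.ball z₀ ε₀ \ {z₀},
      M₂ z = g₂ z + ∑ k ∈ Finset.range N₂, ((z - z₀) ^ (-(k + 1 : ℤ))) • B₂ k := by
    intro z hz
    rw [he₂ z hz, hP₂ z]
    congr 1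
    refine Finset.sum_congr rfl fun k hk => ?_
    rw [hB₂]
    beta_reduce
    rw [if_pos (Finset.mem_range.1 hk)]
  set c₁ : ℕ → H →L[ℂ] H := fun k => (exists_laurent hg₁ k).choose with hc₁def
  have hc₁ : ∀ k : ℕ, ∀ A : H →L[ℂ] H, FinRank A →
      HasFM z₀ ε₀ (fun z => ((z - z₀) ^ (-(k + 1 : ℤ))) • (g₁ z * A)) (c₁ k * A) ∧
      HasFM z₀ ε₀ (fun z => ((z - z₀) ^ (-(k + 1 : ℤ))) • (A * g₁ z)) (A * c₁ k) :=
    fun k => (exists_laurent hg₁ k).choose_spec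
  set c₂ : ℕ → H →L[ℂ] H := fun k => (exists_laurent hg₂ k).choose with hc₂def
  have hc₂ : ∀ k : ℕ, ∀ A : H →L[ℂ] H, FinRank A →
      HasFM z₀ ε₀ (fun z => ((z - z₀) ^ (-(k + 1 : ℤ))) • (g₂ z * A)) (c₂ k * A) ∧
      HasFM z₀ ε₀ (fun z => ((z - z₀) ^ (-(k + 1 : ℤ))) • (A * g₂ z)) (A * c₂ k) :=
    fun k => (exists_laurent hg₂ k).choose_spec
  -- the four pieces for M₁ * M₂
  have h11 : HasFM z₀ ε₀ (fun z => g₁ z * g₂ z) 0 := hasFM_analytic (hg₁.mul hg₂)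
  have h12 : HasFM z₀ ε₀
      (fun z => ∑ l ∈ Finset.range N₂, ((z - z₀) ^ (-(l + 1 : ℤ))) • (g₁ z * B₂ l))
      (∑ l ∈ Finset.range N₂, c₁ l * B₂ l) :=
    hasFM_sum (Finset.range N₂)
      (fun l => fun z => ((z - z₀) ^ (-(l + 1 : ℤ))) • (g₁ z * B₂ l))
      (fun l => c₁ l * B₂ l)
      (fun l _ => (hc₁ l (B₂ l) (hB₂fin l)).1)
  have h21 : HasFM z₀ ε₀
      (fun z => ∑ k ∈ Finset.range N₁, ((z - z₀) ^ (-(k + 1 : ℤ))) • (B₁ k * g₂ z))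
      (∑ k ∈ Finset.range N₁, B₁ k * c₂ k) :=
    hasFM_sum (Finset.range N₁)
      (fun k => fun z => ((z - z₀) ^ (-(k + 1 : ℤ))) • (B₁ k * g₂ z))
      (fun k => B₁ k * c₂ k)
      (fun k _ => (hc₂ k (B₁ k) (hB₁fin k)).2)
  have h22 : HasFM z₀ ε₀
      (fun z => ∑ k ∈ Finset.range N₁, ∑ l ∈ Finset.range N₂,
        (((z - z₀) ^ (-(k + 1 : ℤ))) • B₁ k) * (((z - z₀) ^ (-(l + 1 : ℤ))) • B₂ l))
      (∑ k ∈ Finset.range N₁, ∑ l ∈ Finset.range N₂, (0 : H →L[ℂ] H)) := by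
    refine hasFM_sum (Finset.range N₁) _ _ fun k _ => ?_
    refine hasFM_sum (Finset.range N₂) _ _ fun l _ => ?_
    exact hasFM_laurent_laurent (hB₁fin k) (hB₂fin l) k l
  have hprod12 : HasFM z₀ ε₀ (fun z => M₁ z * M₂ z)
      ((0 + ∑ l ∈ Finset.range N₂, c₁ l * B₂ l) +
        ((∑ k ∈ Finset.range N₁, B₁ k * c₂ k) +
          ∑ k ∈ Finset.range N₁, ∑ l ∈ Finset.range N₂, (0 : H →L[ℂ] H))) := by
    refine hasFM_congr (hasFM_add (hasFM_add h11 h12) (hasFM_add h21 h22)) ?_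
    intro z hz
    show M₁ z * M₂ z = (g₁ z * g₂ z + _) + (_ + _)
    rw [he₁' z hz, he₂' z hz]
    rw [add_mul, mul_add, mul_add]
    have e2 : g₁ z * ∑ l ∈ Finset.range N₂, ((z - z₀) ^ (-(l + 1 : ℤ))) • B₂ l
        = ∑ l ∈ Finset.range N₂, ((z - z₀) ^ (-(l + 1 : ℤ))) • (g₁ z * B₂ l) := by
      rw [Finset.mul_sum]
      exact Finset.sum_congr rfl fun l _ => mul_smul_comm _ _ _
    have e3 : (∑ k ∈ Finset.range N₁, ((z - z₀) ^ (-(k + 1 : ℤ))) • B₁ k) * g₂ z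
        = ∑ k ∈ Finset.range N₁, ((z - z₀) ^ (-(k + 1 : ℤ))) • (B₁ k * g₂ z) := by
      rw [Finset.sum_mul]
      exact Finset.sum_congr rfl fun k _ => smul_mul_assoc _ _ _
    have e4 : (∑ k ∈ Finset.range N₁, ((z - z₀) ^ (-(k + 1 : ℤ))) • B₁ k)
          * ∑ l ∈ Finset.range N₂, ((z - z₀) ^ (-(l + 1 : ℤ))) • B₂ l
        = ∑ k ∈ Finset.range N₁, ∑ l ∈ Finset.range N₂,
            (((z - z₀) ^ (-(k + 1 : ℤ))) • B₁ k) * (((z - z₀) ^ (-(l + 1 : ℤ))) • B₂ l) := by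
      rw [Finset.sum_mul]
      exact Finset.sum_congr rfl fun k _ => Finset.mul_sum _ _ _
    rw [e2, e3, e4]
  -- the four pieces for M₂ * M₁
  have h11' : HasFM z₀ ε₀ (fun z => g₂ z * g₁ z) 0 := hasFM_analytic (hg₂.mul hg₁)
  have h12' : HasFM z₀ ε₀
      (fun z => ∑ k ∈ Finset.range N₁, ((z - z₀) ^ (-(k + 1 : ℤ))) • (g₂ z * B₁ k))
      (∑ k ∈ Finset.range N₁, c₂ k * B₁ k) :=
    hasFM_sum (Finset.range N₁)
      (fun k => fun z => ((z - z₀) ^ (-(k + 1 : ℤ))) • (g₂ z * B₁ k))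
      (fun k => c₂ k * B₁ k)
      (fun k _ => (hc₂ k (B₁ k) (hB₁fin k)).1)
  have h21' : HasFM z₀ ε₀
      (fun z => ∑ l ∈ Finset.range N₂, ((z - z₀) ^ (-(l + 1 : ℤ))) • (B₂ l * g₁ z))
      (∑ l ∈ Finset.range N₂, B₂ l * c₁ l) :=
    hasFM_sum (Finset.range N₂)
      (fun l => fun z => ((z - z₀) ^ (-(l + 1 : ℤ))) • (B₂ l * g₁ z))
      (fun l => B₂ l * c₁ l)
      (fun l _ => (hc₁ l (B₂ l) (hB₂fin l)).2)
  have h22' : HasFM z₀ ε₀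
      (fun z => ∑ l ∈ Finset.range N₂, ∑ k ∈ Finset.range N₁,
        (((z - z₀) ^ (-(l + 1 : ℤ))) • B₂ l) * (((z - z₀) ^ (-(k + 1 : ℤ))) • B₁ k))
      (∑ l ∈ Finset.range N₂, ∑ k ∈ Finset.range N₁, (0 : H →L[ℂ] H)) := by
    refine hasFM_sum (Finset.range N₂) _ _ fun l _ => ?_
    refine hasFM_sum (Finset.range N₁) _ _ fun k _ => ?_
    exact hasFM_laurent_laurent (hB₂fin l) (hB₁fin k) l k
  have hprod21 : HasFM z₀ ε₀ (fun z => M₂ z * M₁ z)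
      ((0 + ∑ k ∈ Finset.range N₁, c₂ k * B₁ k) +
        ((∑ l ∈ Finset.range N₂, B₂ l * c₁ l) +
          ∑ l ∈ Finset.range N₂, ∑ k ∈ Finset.range N₁, (0 : H →L[ℂ] H))) := by
    refine hasFM_congr (hasFM_add (hasFM_add h11' h12') (hasFM_add h21' h22')) ?_
    intro z hz
    show M₂ z * M₁ z = (g₂ z * g₁ z + _) + (_ + _)
    rw [he₁' z hz, he₂' z hz]
    rw [add_mul, mul_add, mul_add]
    have e2 : g₂ z * ∑ k ∈ Finset.range N₁, ((z - z₀) ^ (-(k + 1 : ℤ))) • B₁ k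
        = ∑ k ∈ Finset.range N₁, ((z - z₀) ^ (-(k + 1 : ℤ))) • (g₂ z * B₁ k) := by
      rw [Finset.mul_sum]
      exact Finset.sum_congr rfl fun k _ => mul_smul_comm _ _ _
    have e3 : (∑ l ∈ Finset.range N₂, ((z - z₀) ^ (-(l + 1 : ℤ))) • B₂ l) * g₁ z
        = ∑ l ∈ Finset.range N₂, ((z - z₀) ^ (-(l + 1 : ℤ))) • (B₂ l * g₁ z) := by
      rw [Finset.sum_mul]
      exact Finset.sum_congr rfl fun l _ => smul_mul_assoc _ _ _
    have e4 : (∑ l ∈ Finset.range N₂, ((z - z₀) ^ (-(l + 1 : ℤ))) • B₂ l)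
          * ∑ k ∈ Finset.range N₁, ((z - z₀) ^ (-(k + 1 : ℤ))) • B₁ k
        = ∑ l ∈ Finset.range N₂, ∑ k ∈ Finset.range N₁,
            (((z - z₀) ^ (-(l + 1 : ℤ))) • B₂ l) * (((z - z₀) ^ (-(k + 1 : ℤ))) • B₁ k) := by
      rw [Finset.sum_mul]
      exact Finset.sum_congr rfl fun l _ => Finset.mul_sum _ _ _
    rw [e2, e3, e4]
  refine ⟨hasFM_finitelyMeromorphic hprod12, hasFM_finitelyMeromorphic hprod21, ?_⟩
  intro ε hε hεε
  have hI12 : (∮ ζ in C(z₀, ε), (M₁ ζ ∘L M₂ ζ))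
      = ((2 * Real.pi * Complex.I : ℂ)) • _ := hasFM_integral hprod12 hε hεε
  have hI21 : (∮ ζ in C(z₀, ε), (M₂ ζ ∘L M₁ ζ))
      = ((2 * Real.pi * Complex.I : ℂ)) • _ := hasFM_integral hprod21 hε hεε
  have hfin12 : FinRank ((0 + ∑ l ∈ Finset.range N₂, c₁ l * B₂ l) +
      ((∑ k ∈ Finset.range N₁, B₁ k * c₂ k) +
        ∑ k ∈ Finset.range N₁, ∑ l ∈ Finset.range N₂, (0 : H →L[ℂ] H))) := by
    refine finRank_add (finRank_add finRank_zero ?_) (finRank_add ?_ ?_)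
    · exact finRank_sum _ _ fun l _ => finRank_mul_right _ (hB₂fin l)
    · exact finRank_sum _ _ fun k _ => finRank_mul_left _ (hB₁fin k)
    · exact finRank_sum _ _ fun k _ => finRank_sum _ _ fun l _ => finRank_zero
  have hfin21 : FinRank ((0 + ∑ k ∈ Finset.range N₁, c₂ k * B₁ k) +
      ((∑ l ∈ Finset.range N₂, B₂ l * c₁ l) +
        ∑ l ∈ Finset.range N₂, ∑ k ∈ Finset.range N₁, (0 : H →L[ℂ] H))) := by
    refine finRank_add (finRank_add finRank_zero ?_) (finRank_add ?_ ?_)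
    · exact finRank_sum _ _ fun k _ => finRank_mul_right _ (hB₁fin k)
    · exact finRank_sum _ _ fun l _ => finRank_mul_left _ (hB₂fin l)
    · exact finRank_sum _ _ fun l _ => finRank_sum _ _ fun k _ => finRank_zero
  refine ⟨by rw [hI12]; exact finRank_smul _ hfin12,
    by rw [hI21]; exact finRank_smul _ hfin21, ?_⟩
  have key : ∀ S T : H →L[ℂ] H,
      LinearMap.trace ℂ H ↑(S * T) = LinearMap.trace ℂ H ↑(T * S) := by
    intro S T
    rw [ContinuousLinearMap.mul_def, ContinuousLinearMap.mul_def,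
      ContinuousLinearMap.toLinearMap_comp, ContinuousLinearMap.toLinearMap_comp,
      ← Module.End.mul_eq_comp, ← Module.End.mul_eq_comp, LinearMap.trace_mul_comm]
  rw [hI12, hI21]
  simp only [ContinuousLinearMap.coe_smul, map_smul, Finset.sum_const_zero, zero_add,
    add_zero, ContinuousLinearMap.coe_add, ContinuousLinearMap.coe_sum, map_add, map_sum]
  rw [add_comm]
  refine congrArg _ ?_
  exact congrArg₂ (· + ·) (Finset.sum_congr rfl fun k _ => key (B₁ k) (c₂ k))
    (Finset.sum_congr rfl fun l _ => key (c₁ l) (B₂ l))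
end

section
/- (Resolvent identity for the Birman–Schwinger operator) Assume H₀ is a densely defined closed operator in H with z₁, z₂ in its resolvent set, V₁, V₂ are densely defined closed operators from H to K with dom(V₁) ⊇ dom(H₀), dom(V₂) ⊇ dom(H₀*), and K(z) = -closure(V₁(H₀ - z)⁻¹V₂*) ∈ B(K) for z ∈ ρ(H₀). Then K(z₁) = K(z₂) + (z₂ - z₁) V₁(H₀ - z₁)⁻¹ closure((H₀ - z₂)⁻¹V₂*). -/
/-- (Resolvent identity for the Birman–Schwinger operator.)
Under the Kato–Konno–Kuroda hypotheses — `H₀` densely defined and closed in `H` with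
resolvent set `ρ` and resolvent `R₀ z = (H₀ - z)⁻¹`; `V₁, V₂` densely defined closed
operators from `H` to `K` with `dom V₁ ⊇ dom H₀`, `dom V₂ ⊇ dom H₀*`; `V₁R₀ z` the
bounded operator `V₁ R₀(z)`; `RV₂ z` the bounded closure of `R₀(z) V₂*`; and
`BS z = -closure(V₁ R₀(z) V₂*)` — one has, for `z₁, z₂ ∈ ρ`,
`K(z₁) = K(z₂) + (z₂ - z₁) V₁R₀(z₁) ∘ closure(R₀(z₂)V₂*)`. -/
theorem birmanSchwinger_resolvent_identity
    {H K : Type*} [NormedAddCommGroup H] [InnerProductSpace ℂ H] [CompleteSpace H]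
    [NormedAddCommGroup K] [InnerProductSpace ℂ K] [CompleteSpace K]
    (H₀ : H →ₗ.[ℂ] H) (hH₀dense : Dense (H₀.domain : Set H)) (hH₀closed : H₀.IsClosed)
    (V₁ : H →ₗ.[ℂ] K) (hV₁dense : Dense (V₁.domain : Set H)) (hV₁closed : V₁.IsClosed)
    (V₂ : H →ₗ.[ℂ] K) (hV₂dense : Dense (V₂.domain : Set H)) (hV₂closed : V₂.IsClosed)
    (hdomV₁ : H₀.domain ≤ V₁.domain)
    (hdomV₂ : (LinearPMap.adjoint H₀).domain ≤ V₂.domain)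
    (hV₂adjDense : Dense ((LinearPMap.adjoint V₂).domain : Set K))
    (ρ : Set ℂ) (R₀ : ℂ → H →L[ℂ] H)
    (hR₀ : ∀ z ∈ ρ,
      (∀ y : H, ∃ hy : R₀ z y ∈ H₀.domain, H₀ ⟨R₀ z y, hy⟩ - z • R₀ z y = y) ∧
      (∀ x : H₀.domain, R₀ z (H₀ x - z • (x : H)) = (x : H)))
    (V₁R₀ : ℂ → H →L[ℂ] K)
    (hV₁R₀ : ∀ z ∈ ρ, ∀ (y : H) (hy : R₀ z y ∈ V₁.domain),
      V₁R₀ z y = V₁ ⟨R₀ z y, hy⟩)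
    (RV₂ : ℂ → K →L[ℂ] H)
    (hRV₂ : ∀ z ∈ ρ, ∀ g : (LinearPMap.adjoint V₂).domain,
      RV₂ z (g : K) = R₀ z (LinearPMap.adjoint V₂ g))
    (BS : ℂ → K →L[ℂ] K)
    (hBS : ∀ z ∈ ρ, ∀ g : (LinearPMap.adjoint V₂).domain,
      BS z (g : K) = -(V₁R₀ z (LinearPMap.adjoint V₂ g)))
    (z₁ : ℂ) (hz₁ : z₁ ∈ ρ) (z₂ : ℂ) (hz₂ : z₂ ∈ ρ) :
    BS z₁ = BS z₂ + (z₂ - z₁) • (V₁R₀ z₁ ∘L RV₂ z₂) := by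
  -- Key pointwise resolvent identity for V₁R₀
  have key : ∀ f : H, V₁R₀ z₁ f = V₁R₀ z₂ f + (z₁ - z₂) • V₁R₀ z₁ (R₀ z₂ f) := by
    intro f
    obtain ⟨h2, hf2⟩ := (hR₀ z₂ hz₂).1 f
    have hx := (hR₀ z₁ hz₁).2 ⟨R₀ z₂ f, h2⟩
    have hH0x : H₀ ⟨R₀ z₂ f, h2⟩ = f + z₂ • R₀ z₂ f := by
      linear_combination (norm := module) hf2
    have hx' : R₀ z₁ (f + (z₂ - z₁) • R₀ z₂ f) = R₀ z₂ f := by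
      have harg : f + (z₂ - z₁) • R₀ z₂ f
          = H₀ ⟨R₀ z₂ f, h2⟩ - z₁ • R₀ z₂ f := by rw [hH0x]; module
      rw [harg]; exact hx
    have hvec : R₀ z₂ f = R₀ z₁ f + (z₂ - z₁) • R₀ z₁ (R₀ z₂ f) := by
      conv_lhs => rw [← hx']
      rw [map_add, map_smul]
    obtain ⟨m1, -⟩ := (hR₀ z₁ hz₁).1 f
    obtain ⟨m3, -⟩ := (hR₀ z₁ hz₁).1 (R₀ z₂ f)
    have hm2 : R₀ z₂ f ∈ V₁.domain := hdomV₁ h2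
    rw [hV₁R₀ z₁ hz₁ f (hdomV₁ m1), hV₁R₀ z₂ hz₂ f hm2,
        hV₁R₀ z₁ hz₁ (R₀ z₂ f) (hdomV₁ m3)]
    have hsub : (⟨R₀ z₂ f, hm2⟩ : V₁.domain)
        = ⟨R₀ z₁ f, hdomV₁ m1⟩ + (z₂ - z₁) • ⟨R₀ z₁ (R₀ z₂ f), hdomV₁ m3⟩ := by
      ext; exact hvec
    rw [hsub, V₁.map_add, V₁.map_smul]
    module
  -- extend from the dense domain of V₂*
  refine DFunLike.coe_injective (Continuous.ext_on hV₂adjDense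
    (BS z₁).continuous (BS z₂ + (z₂ - z₁) • (V₁R₀ z₁ ∘L RV₂ z₂)).continuous ?_)
  intro g hg
  show BS z₁ ((⟨g, hg⟩ : (LinearPMap.adjoint V₂).domain) : K)
      = (BS z₂ + (z₂ - z₁) • (V₁R₀ z₁ ∘L RV₂ z₂))
          ((⟨g, hg⟩ : (LinearPMap.adjoint V₂).domain) : K)
  simp only [ContinuousLinearMap.add_apply, ContinuousLinearMap.smul_apply,
    ContinuousLinearMap.comp_apply]
  rw [hBS z₁ hz₁ ⟨g, hg⟩, hBS z₂ hz₂ ⟨g, hg⟩, hRV₂ z₂ hz₂ ⟨g, hg⟩,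
    key (LinearPMap.adjoint V₂ ⟨g, hg⟩)]
  module
end

section
/- (Derivative of the Birman–Schwinger operator) Under the Kato–Konno–Kuroda hypotheses, the B(K)-valued function K(·) is analytic on ρ(H₀) with derivative K'(z) = -V₁R₀(z) · closure(R₀(z)V₂*) for all z ∈ ρ(H₀). -/
open Topology Filter


/-- (Derivative of the Birman–Schwinger operator.)
Under the Kato–Konno–Kuroda hypotheses, the `B(K)`-valued Birman–Schwinger function
`K(·) = BS` is analytic on the (open) resolvent set `ρ(H₀)` with derivative
`K'(z) = -V₁R₀(z) ∘ closure(R₀(z)V₂*)` for all `z ∈ ρ(H₀)`. -/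
theorem birmanSchwinger_hasDerivAt
    {H K : Type*} [NormedAddCommGroup H] [InnerProductSpace ℂ H] [CompleteSpace H]
    [NormedAddCommGroup K] [InnerProductSpace ℂ K] [CompleteSpace K]
    (H₀ : H →ₗ.[ℂ] H) (hH₀dense : Dense (H₀.domain : Set H)) (hH₀closed : H₀.IsClosed)
    (V₁ : H →ₗ.[ℂ] K) (hV₁dense : Dense (V₁.domain : Set H)) (hV₁closed : V₁.IsClosed)
    (V₂ : H →ₗ.[ℂ] K) (hV₂dense : Dense (V₂.domain : Set H)) (hV₂closed : V₂.IsClosed)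
    (hdomV₁ : H₀.domain ≤ V₁.domain)
    (hdomV₂ : (LinearPMap.adjoint H₀).domain ≤ V₂.domain)
    (hV₂adjDense : Dense ((LinearPMap.adjoint V₂).domain : Set K))
    (ρ : Set ℂ) (R₀ : ℂ → H →L[ℂ] H)
    (hR₀ : ∀ z ∈ ρ,
      (∀ y : H, ∃ hy : R₀ z y ∈ H₀.domain, H₀ ⟨R₀ z y, hy⟩ - z • R₀ z y = y) ∧
      (∀ x : H₀.domain, R₀ z (H₀ x - z • (x : H)) = (x : H)))
    (V₁R₀ : ℂ → H →L[ℂ] K)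
    (hV₁R₀ : ∀ z ∈ ρ, ∀ (y : H) (hy : R₀ z y ∈ V₁.domain),
      V₁R₀ z y = V₁ ⟨R₀ z y, hy⟩)
    (RV₂ : ℂ → K →L[ℂ] H)
    (hRV₂ : ∀ z ∈ ρ, ∀ g : (LinearPMap.adjoint V₂).domain,
      RV₂ z (g : K) = R₀ z (LinearPMap.adjoint V₂ g))
    (BS : ℂ → K →L[ℂ] K)
    (hBS : ∀ z ∈ ρ, ∀ g : (LinearPMap.adjoint V₂).domain,
      BS z (g : K) = -(V₁R₀ z (LinearPMap.adjoint V₂ g)))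
    (hρ : IsOpen ρ) :
    AnalyticOnNhd ℂ BS ρ ∧
    ∀ z ∈ ρ, HasDerivAt BS (-(V₁R₀ z ∘L RV₂ z)) z := by

  classical
  -- resolvent membership facts
  have hmem : ∀ z ∈ ρ, ∀ y : H, R₀ z y ∈ H₀.domain := fun z hz y => ((hR₀ z hz).1 y).choose
  have hmemV : ∀ z ∈ ρ, ∀ y : H, R₀ z y ∈ V₁.domain := fun z hz y => hdomV₁ (hmem z hz y)
  -- first resolvent identity
  have hres : ∀ z ∈ ρ, ∀ w ∈ ρ, ∀ y : H,
      R₀ w y = R₀ z y + (w - z) • R₀ w (R₀ z y) := by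
    intro z hz w hw y
    obtain ⟨hy, heq⟩ := (hR₀ z hz).1 y
    have h2 := (hR₀ w hw).2 ⟨R₀ z y, hy⟩
    have h3 : y = (H₀ ⟨R₀ z y, hy⟩ - w • R₀ z y) + (w - z) • R₀ z y := by
      calc y = H₀ ⟨R₀ z y, hy⟩ - z • R₀ z y := heq.symm
        _ = (H₀ ⟨R₀ z y, hy⟩ - w • R₀ z y) + (w - z) • R₀ z y := by module
    calc R₀ w y = R₀ w ((H₀ ⟨R₀ z y, hy⟩ - w • R₀ z y) + (w - z) • R₀ z y) :=
          congrArg (R₀ w) h3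
      _ = R₀ z y + (w - z) • R₀ w (R₀ z y) := by rw [map_add, map_smul, h2]
  -- resolvent identity for V₁R₀
  have hvres : ∀ z ∈ ρ, ∀ w ∈ ρ, ∀ y : H,
      V₁R₀ w y = V₁R₀ z y + (w - z) • V₁R₀ w (R₀ z y) := by
    intro z hz w hw y
    rw [hV₁R₀ w hw y (hmemV w hw y), hV₁R₀ z hz y (hmemV z hz y),
      hV₁R₀ w hw (R₀ z y) (hmemV w hw (R₀ z y))]
    have h4 : (⟨R₀ w y, hmemV w hw y⟩ : V₁.domain)
        = ⟨R₀ z y, hmemV z hz y⟩ + (w - z) • ⟨R₀ w (R₀ z y), hmemV w hw (R₀ z y)⟩ := by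
      apply Subtype.ext
      simpa using hres z hz w hw y
    rw [h4, V₁.map_add, V₁.map_smul]
  -- operator form
  have hvop : ∀ z ∈ ρ, ∀ w ∈ ρ,
      V₁R₀ w = V₁R₀ z + (w - z) • (V₁R₀ w ∘L R₀ z) := by
    intro z hz w hw
    ext y
    simpa using hvres z hz w hw y
  -- Birman–Schwinger operator identity
  have hbsop : ∀ z ∈ ρ, ∀ w ∈ ρ,
      BS w = BS z - (w - z) • (V₁R₀ w ∘L RV₂ z) := by
    intro z hz w hw
    apply ContinuousLinearMap.coeFn_injective
    refine Continuous.ext_on hV₂adjDense (BS w).continuous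
      ((BS z) - (w - z) • (V₁R₀ w ∘L RV₂ z)).continuous ?_
    rintro k hk
    set g : (LinearPMap.adjoint V₂).domain := ⟨k, hk⟩ with hg
    have hkg : k = (g : K) := rfl
    rw [hkg, hBS w hw g, hvres z hz w hw (LinearPMap.adjoint V₂ g)]
    simp only [ContinuousLinearMap.sub_apply, ContinuousLinearMap.smul_apply,
      ContinuousLinearMap.comp_apply, hBS z hz g, hRV₂ z hz g, neg_add]
    abel
  -- the derivative at each point
  have hderiv : ∀ z ∈ ρ, HasDerivAt BS (-(V₁R₀ z ∘L RV₂ z)) z := by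
    intro z hz
    rw [hasDerivAt_iff_tendsto_slope]
    set C := ‖R₀ z‖ with hC
    set M := ‖V₁R₀ z‖ with hM
    set D := ‖RV₂ z‖ with hD
    -- eventual bound
    have hball : ∀ᶠ w in 𝓝 z, w ∈ ρ ∧ ‖w - z‖ ≤ (2 * (C + 1))⁻¹ := by
      have h1 : ∀ᶠ w in 𝓝 z, w ∈ ρ := hρ.eventually_mem hz
      have h2 : ∀ᶠ w in 𝓝 z, ‖w - z‖ ≤ (2 * (C + 1))⁻¹ := by
        have hr : (0 : ℝ) < (2 * (C + 1))⁻¹ := by positivity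
        have := Metric.closedBall_mem_nhds z hr
        filter_upwards [this] with w hw
        simpa [Metric.mem_closedBall, dist_eq_norm] using hw
      filter_upwards [h1, h2] with w using And.intro
    have hbound : ∀ᶠ w in 𝓝 z,
        ‖(-(V₁R₀ w ∘L RV₂ z)) - (-(V₁R₀ z ∘L RV₂ z))‖ ≤ (2 * M * C * D) * ‖w - z‖ := by
      filter_upwards [hball] with w hw
      obtain ⟨hwρ, hwb⟩ := hw
      have hVb : ‖V₁R₀ w‖ ≤ 2 * M := by
        have h5 : ‖V₁R₀ w‖ ≤ M + ‖w - z‖ * (‖V₁R₀ w‖ * C) := by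
          calc ‖V₁R₀ w‖ = ‖V₁R₀ z + (w - z) • (V₁R₀ w ∘L R₀ z)‖ := by
                rw [← hvop z hz w hwρ]
            _ ≤ ‖V₁R₀ z‖ + ‖(w - z) • (V₁R₀ w ∘L R₀ z)‖ := norm_add_le _ _
            _ ≤ M + ‖w - z‖ * (‖V₁R₀ w‖ * C) := by
                have hns := norm_smul (w - z) (V₁R₀ w ∘L R₀ z)
                rw [hns]
                gcongr
                exact ContinuousLinearMap.opNorm_comp_le _ _
        have hCpos : (0 : ℝ) < C + 1 := by positivity
        have hC0 : (0 : ℝ) ≤ C := norm_nonneg _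
        have h6 : ‖w - z‖ * C ≤ 1 / 2 := by
          have h : ‖w - z‖ * C ≤ (2 * (C + 1))⁻¹ * (C + 1) :=
            mul_le_mul hwb (by linarith) hC0 (by positivity)
          have h7 : (2 * (C + 1))⁻¹ * (C + 1) = 1 / 2 := by field_simp
          linarith
        have h6' : ‖w - z‖ * C * ‖V₁R₀ w‖ ≤ 1 / 2 * ‖V₁R₀ w‖ :=
          mul_le_mul_of_nonneg_right h6 (norm_nonneg _)
        have hM0 : (0 : ℝ) ≤ M := norm_nonneg _
        nlinarith [h5, h6', hM0]
      have hVdiff : ‖V₁R₀ w - V₁R₀ z‖ ≤ ‖w - z‖ * (2 * M * C) := by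
        have : V₁R₀ w - V₁R₀ z = (w - z) • (V₁R₀ w ∘L R₀ z) := by
          rw [sub_eq_iff_eq_add, add_comm]
          exact hvop z hz w hwρ
        rw [this]
        have hns := norm_smul (w - z) (V₁R₀ w ∘L R₀ z)
        rw [hns]
        have := ContinuousLinearMap.opNorm_comp_le (V₁R₀ w) (R₀ z)
        have h8 : ‖V₁R₀ w ∘L R₀ z‖ ≤ 2 * M * C := by
          calc ‖V₁R₀ w ∘L R₀ z‖ ≤ ‖V₁R₀ w‖ * ‖R₀ z‖ := this
            _ ≤ 2 * M * C := by rw [← hC]; gcongr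
        gcongr
      have h9 : (-(V₁R₀ w ∘L RV₂ z)) - (-(V₁R₀ z ∘L RV₂ z))
          = -((V₁R₀ w - V₁R₀ z) ∘L RV₂ z) := by
        rw [ContinuousLinearMap.sub_comp]; abel
      rw [h9, norm_neg]
      calc ‖(V₁R₀ w - V₁R₀ z) ∘L RV₂ z‖ ≤ ‖V₁R₀ w - V₁R₀ z‖ * D :=
            ContinuousLinearMap.opNorm_comp_le _ _
        _ ≤ (‖w - z‖ * (2 * M * C)) * D := by gcongr
        _ = (2 * M * C * D) * ‖w - z‖ := by ring
    have hcont : Filter.Tendsto (fun w => -(V₁R₀ w ∘L RV₂ z)) (𝓝[≠] z)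
        (𝓝 (-(V₁R₀ z ∘L RV₂ z))) := by
      rw [← tendsto_sub_nhds_zero_iff]
      have h0 : Filter.Tendsto (fun w : ℂ => (2 * M * C * D) * ‖w - z‖) (𝓝 z) (𝓝 0) := by
        have h1 : Filter.Tendsto (fun w : ℂ => ‖w - z‖) (𝓝 z) (𝓝 0) := by
          have h2 : Filter.Tendsto (fun w : ℂ => w - z) (𝓝 z) (𝓝 (z - z)) :=
            Filter.tendsto_id.sub tendsto_const_nhds
          simpa using h2.norm
        simpa using h1.const_mul (2 * M * C * D)
      exact squeeze_zero_norm' (hbound.filter_mono nhdsWithin_le_nhds)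
        (h0.mono_left nhdsWithin_le_nhds)
    refine hcont.congr' ?_ |>.mono_left le_rfl
    -- eventual equality slope = -(V₁R₀ w ∘L RV₂ z)
    filter_upwards [(hρ.eventually_mem hz).filter_mono nhdsWithin_le_nhds,
      self_mem_nhdsWithin] with w hwρ hwne
    have hwz : w - z ≠ 0 := sub_ne_zero.mpr hwne
    rw [slope_def_module]
    rw [hbsop z hz w hwρ]
    rw [sub_sub_cancel_left]
    rw [smul_neg, smul_smul, inv_mul_cancel₀ hwz, one_smul]
  have hdiff : DifferentiableOn ℂ BS ρ := fun z hz =>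
    (hderiv z hz).differentiableAt.differentiableWithinAt
  exact ⟨hdiff.analyticOnNhd hρ, hderiv⟩
end

section
/- (Abstract Birman–Schwinger principle, eigenvalue direction) Assume the Kato–Konno–Kuroda hypotheses and let z₀ ∈ ρ(H₀). If K(z₀)g = g for some nonzero g ∈ K, then f = -closure(R₀(z₀)V₂*) g is a nonzero element of dom(H) and Hf = z₀ f; in particular 1 ∈ σ_p(K(z₀)) implies z₀ ∈ σ_p(H). -/
/-- Two continuous linear maps agreeing on a dense set are equal. -/
lemma dense_clm_ext {E F : Type*} [NormedAddCommGroup E] [NormedSpace ℂ E]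
    [NormedAddCommGroup F] [NormedSpace ℂ F] {s : Set E} (hs : Dense s)
    {S T : E →L[ℂ] F} (h : ∀ x ∈ s, S x = T x) : S = T := by
  ext x
  exact congrFun (Continuous.ext_on hs S.continuous T.continuous h) x

/-- (Abstract Birman–Schwinger principle, eigenvalue direction.)
Under the Kato–Konno–Kuroda hypotheses, with `Hp` the closed operator `H` defined by the
Kato resolvent formula `(H - z)⁻¹ = R₀(z) - closure(R₀(z)V₂*) [I - K(z)]⁻¹ V₁R₀(z)`:
if `z₀ ∈ ρ(H₀)` and `K(z₀) g = g` for some `g ≠ 0`, then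
`f = -closure(R₀(z₀)V₂*) g` is a nonzero element of `dom H` with `H f = z₀ f`;
in particular `1 ∈ σ_p(K(z₀))` implies `z₀ ∈ σ_p(H)`. -/
theorem birmanSchwinger_eigenvalue_direction
    {H K : Type*} [NormedAddCommGroup H] [InnerProductSpace ℂ H] [CompleteSpace H]
    [NormedAddCommGroup K] [InnerProductSpace ℂ K] [CompleteSpace K]
    (H₀ : H →ₗ.[ℂ] H) (hH₀dense : Dense (H₀.domain : Set H)) (hH₀closed : H₀.IsClosed)
    (V₁ : H →ₗ.[ℂ] K) (hV₁dense : Dense (V₁.domain : Set H)) (hV₁closed : V₁.IsClosed)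
    (V₂ : H →ₗ.[ℂ] K) (hV₂dense : Dense (V₂.domain : Set H)) (hV₂closed : V₂.IsClosed)
    (hdomV₁ : H₀.domain ≤ V₁.domain)
    (hdomV₂ : (LinearPMap.adjoint H₀).domain ≤ V₂.domain)
    (hV₂adjDense : Dense ((LinearPMap.adjoint V₂).domain : Set K))
    (ρ : Set ℂ) (R₀ : ℂ → H →L[ℂ] H)
    (hR₀ : ∀ z ∈ ρ,
      (∀ y : H, ∃ hy : R₀ z y ∈ H₀.domain, H₀ ⟨R₀ z y, hy⟩ - z • R₀ z y = y) ∧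
      (∀ x : H₀.domain, R₀ z (H₀ x - z • (x : H)) = (x : H)))
    (V₁R₀ : ℂ → H →L[ℂ] K)
    (hV₁R₀ : ∀ z ∈ ρ, ∀ (y : H) (hy : R₀ z y ∈ V₁.domain),
      V₁R₀ z y = V₁ ⟨R₀ z y, hy⟩)
    (RV₂ : ℂ → K →L[ℂ] H)
    (hRV₂ : ∀ z ∈ ρ, ∀ g : (LinearPMap.adjoint V₂).domain,
      RV₂ z (g : K) = R₀ z (LinearPMap.adjoint V₂ g))
    (BS : ℂ → K →L[ℂ] K)
    (hBS : ∀ z ∈ ρ, ∀ g : (LinearPMap.adjoint V₂).domain,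
      BS z (g : K) = -(V₁R₀ z (LinearPMap.adjoint V₂ g)))
    (hζ₀ : ∃ ζ₀ ∈ ρ, IsUnit ((1 : K →L[ℂ] K) - BS ζ₀))
    (Hp : H →ₗ.[ℂ] H) (hHpdense : Dense (Hp.domain : Set H)) (hHpclosed : Hp.IsClosed)
    (hHp : ∀ z ∈ ρ, ∀ W : K →L[ℂ] K,
      ((1 : K →L[ℂ] K) - BS z) ∘L W = 1 → W ∘L ((1 : K →L[ℂ] K) - BS z) = 1 →
      (∀ y : H, ∃ hy : (R₀ z - RV₂ z ∘L W ∘L V₁R₀ z) y ∈ Hp.domain,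
          Hp ⟨(R₀ z - RV₂ z ∘L W ∘L V₁R₀ z) y, hy⟩
            - z • (R₀ z - RV₂ z ∘L W ∘L V₁R₀ z) y = y) ∧
      (∀ x : Hp.domain, (R₀ z - RV₂ z ∘L W ∘L V₁R₀ z) (Hp x - z • (x : H)) = (x : H)))
    (z₀ : ℂ) (hz₀ : z₀ ∈ ρ) (g : K) (hg : g ≠ 0) (hKg : BS z₀ g = g) :
    -(RV₂ z₀ g) ≠ 0 ∧
    ∃ hf : -(RV₂ z₀ g) ∈ Hp.domain, Hp ⟨-(RV₂ z₀ g), hf⟩ = z₀ • (-(RV₂ z₀ g)) := by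
  obtain ⟨ζ₀, hζρ, hU⟩ := hζ₀
  -- membership facts
  have memH₀ : ∀ z ∈ ρ, ∀ y : H, R₀ z y ∈ H₀.domain := fun z hz y =>
    ((hR₀ z hz).1 y).choose
  have memV₁ : ∀ z ∈ ρ, ∀ y : H, R₀ z y ∈ V₁.domain := fun z hz y =>
    hdomV₁ (memH₀ z hz y)
  -- key resolvent identity for R₀
  have resKey : ∀ z ∈ ρ, ∀ w ∈ ρ, ∀ y : H,
      R₀ z (y + (w - z) • R₀ w y) = R₀ w y := by
    intro z hz w hw y
    obtain ⟨hy, hyeq⟩ := (hR₀ w hw).1 y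
    have hH : H₀ ⟨R₀ w y, hy⟩ = y + w • R₀ w y := sub_eq_iff_eq_add.mp hyeq
    have h2 := (hR₀ z hz).2 ⟨R₀ w y, hy⟩
    have harg : H₀ ⟨R₀ w y, hy⟩ - z • R₀ w y = y + (w - z) • R₀ w y := by
      rw [hH, sub_smul]; abel
    rw [harg] at h2
    exact h2
  have res₀ : ∀ z ∈ ρ, ∀ w ∈ ρ, ∀ y : H,
      R₀ z y - R₀ w y = (z - w) • R₀ z (R₀ w y) := by
    intro z hz w hw y
    have key : R₀ z y + (w - z) • R₀ z (R₀ w y) = R₀ w y := by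
      have := resKey z hz w hw y
      rwa [map_add, map_smul] at this
    set X := R₀ z (R₀ w y) with hX
    rw [← key]
    module
  -- resolvent identity for V₁R₀
  have resV₁ : ∀ z ∈ ρ, ∀ w ∈ ρ, ∀ y : H,
      V₁R₀ w y = V₁R₀ z y + (w - z) • V₁R₀ z (R₀ w y) := by
    intro z hz w hw y
    have e1 : V₁R₀ z (y + (w - z) • R₀ w y)
        = V₁ ⟨R₀ z (y + (w - z) • R₀ w y), memV₁ z hz _⟩ := hV₁R₀ z hz _ _
    have e2 : V₁R₀ w y = V₁ ⟨R₀ w y, memV₁ w hw y⟩ := hV₁R₀ w hw y _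
    have hsub : (⟨R₀ z (y + (w - z) • R₀ w y), memV₁ z hz _⟩ : V₁.domain)
        = ⟨R₀ w y, memV₁ w hw y⟩ := Subtype.ext (resKey z hz w hw y)
    have : V₁R₀ z (y + (w - z) • R₀ w y) = V₁R₀ w y := by
      rw [e1, hsub, ← e2]
    rw [← this, map_add, map_smul]
  -- resolvent identity for RV₂ (by density)
  have resRV₂ : ∀ z ∈ ρ, ∀ w ∈ ρ,
      RV₂ z = RV₂ w + (z - w) • (R₀ z ∘L RV₂ w) := by
    intro z hz w hw
    apply dense_clm_ext hV₂adjDense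
    intro x hx
    have hx' : RV₂ z x = R₀ z (LinearPMap.adjoint V₂ ⟨x, hx⟩) := hRV₂ z hz ⟨x, hx⟩
    have hw' : RV₂ w x = R₀ w (LinearPMap.adjoint V₂ ⟨x, hx⟩) := hRV₂ w hw ⟨x, hx⟩
    have := res₀ z hz w hw (LinearPMap.adjoint V₂ ⟨x, hx⟩)
    simp only [ContinuousLinearMap.add_apply, ContinuousLinearMap.smul_apply,
      ContinuousLinearMap.comp_apply, hx', hw']
    rw [sub_eq_iff_eq_add] at this
    rw [this]; ring_nf; abel
  -- resolvent identity for BS (by density)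
  have resBS : ∀ z ∈ ρ, ∀ w ∈ ρ,
      BS z = BS w + (w - z) • (V₁R₀ z ∘L RV₂ w) := by
    intro z hz w hw
    apply dense_clm_ext hV₂adjDense
    intro x hx
    have hz' : BS z x = -(V₁R₀ z (LinearPMap.adjoint V₂ ⟨x, hx⟩)) := hBS z hz ⟨x, hx⟩
    have hw' : BS w x = -(V₁R₀ w (LinearPMap.adjoint V₂ ⟨x, hx⟩)) := hBS w hw ⟨x, hx⟩
    have hw'' : RV₂ w x = R₀ w (LinearPMap.adjoint V₂ ⟨x, hx⟩) := hRV₂ w hw ⟨x, hx⟩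
    have hres := resV₁ z hz w hw (LinearPMap.adjoint V₂ ⟨x, hx⟩)
    simp only [ContinuousLinearMap.add_apply, ContinuousLinearMap.smul_apply,
      ContinuousLinearMap.comp_apply, hz', hw', hw'']
    rw [hres]; abel
  -- invertibility data at ζ₀
  obtain ⟨u, hu⟩ := hU
  set U : K →L[ℂ] K := (1 : K →L[ℂ] K) - BS ζ₀ with hUdef
  set W : K →L[ℂ] K := ↑u⁻¹ with hWdef
  have hW1 : U ∘L W = 1 := by
    rw [← ContinuousLinearMap.mul_def, ← hu]
    exact u.mul_inv
  have hW2 : W ∘L U = 1 := by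
    rw [← ContinuousLinearMap.mul_def, ← hu]
    exact u.inv_mul
  have hWU : ∀ k : K, W (U k) = k := by
    intro k
    have := congrFun (congrArg (fun T : K →L[ℂ] K => (T : K → K)) hW2) k
    simpa using this
  -- z₀ ≠ ζ₀
  have hne : z₀ ≠ ζ₀ := by
    intro h
    apply hg
    have hUg : U g = 0 := by
      simp [hUdef, ← h, hKg]
    have := hWU g
    rw [hUg, map_zero] at this
    exact this.symm
  set c : ℂ := z₀ - ζ₀ with hcdef
  have hc : c ≠ 0 := sub_ne_zero.mpr hne
  set f : H := -(RV₂ z₀ g) with hfdef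
  -- key identity (*) : BS ζ₀ g - g = c • V₁R₀ ζ₀ (RV₂ z₀ g)
  have star₁ : BS ζ₀ g = g + c • V₁R₀ ζ₀ (RV₂ z₀ g) := by
    have := congrFun (congrArg (fun T : K →L[ℂ] K => (T : K → K)) (resBS ζ₀ hζρ z₀ hz₀)) g
    simpa [hKg, hcdef] using this
  -- nonzero
  have hfne : f ≠ 0 := by
    intro h0
    apply hg
    have hRg : RV₂ z₀ g = 0 := by
      rw [hfdef] at h0; exact neg_eq_zero.mp h0
    have hUg : U g = 0 := by
      simp [hUdef, star₁, hRg]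
    have := hWU g
    rw [hUg, map_zero] at this
    exact this.symm
  -- key identity (**) : c • R₀ ζ₀ (RV₂ z₀ g) = RV₂ z₀ g - RV₂ ζ₀ g
  have star₂ : c • R₀ ζ₀ (RV₂ z₀ g) = RV₂ z₀ g - RV₂ ζ₀ g := by
    have := congrFun (congrArg (fun T : K →L[ℂ] H => (T : K → H)) (resRV₂ ζ₀ hζρ z₀ hz₀)) g
    simp only [ContinuousLinearMap.add_apply, ContinuousLinearMap.smul_apply,
      ContinuousLinearMap.comp_apply] at this
    have h2 : (ζ₀ - z₀) = -c := by rw [hcdef]; ring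
    rw [h2, neg_smul] at this
    rw [this]; abel
  -- the resolvent of Hp at ζ₀
  set Rop : H →L[ℂ] H := R₀ ζ₀ - RV₂ ζ₀ ∘L W ∘L V₁R₀ ζ₀ with hRopdef
  obtain ⟨hfor, _⟩ := hHp ζ₀ hζρ W hW1 hW2
  obtain ⟨hmem, heq⟩ := hfor f
  -- compute c • Rop f = f
  have hV₁f : c • V₁R₀ ζ₀ f = U g := by
    rw [hfdef, map_neg, smul_neg]
    have : c • V₁R₀ ζ₀ (RV₂ z₀ g) = BS ζ₀ g - g := by
      rw [star₁]; abel
    rw [this, hUdef]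
    simp only [ContinuousLinearMap.sub_apply, ContinuousLinearMap.one_apply]
    abel
  have hRf : c • Rop f = f := by
    rw [hRopdef]
    simp only [ContinuousLinearMap.sub_apply, ContinuousLinearMap.comp_apply]
    rw [smul_sub]
    have h1 : c • R₀ ζ₀ f = RV₂ ζ₀ g - RV₂ z₀ g := by
      rw [hfdef, map_neg, smul_neg, star₂]; abel
    have h2 : c • RV₂ ζ₀ (W (V₁R₀ ζ₀ f)) = RV₂ ζ₀ g := by
      rw [← map_smul, ← map_smul, hV₁f, hWU]
    rw [h1, h2, hfdef]; abel
  -- conclude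
  refine ⟨hfne, ?_, ?_⟩
  · have := Hp.domain.smul_mem c hmem
    rwa [hRf] at this
  · have hmemf : f ∈ Hp.domain := by
      have := Hp.domain.smul_mem c hmem
      rwa [hRf] at this
    have hsub : (⟨f, hmemf⟩ : Hp.domain) = c • ⟨Rop f, hmem⟩ := by
      apply Subtype.ext
      exact hRf.symm
    have hHpRf : Hp ⟨Rop f, hmem⟩ = f + ζ₀ • Rop f := sub_eq_iff_eq_add.mp heq
    calc Hp ⟨f, hmemf⟩ = Hp (c • ⟨Rop f, hmem⟩) := by rw [hsub]
      _ = c • Hp ⟨Rop f, hmem⟩ := Hp.map_smul c _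
      _ = c • (f + ζ₀ • Rop f) := by rw [hHpRf]
      _ = c • f + ζ₀ • (c • Rop f) := by module
      _ = c • f + ζ₀ • f := by rw [hRf]
      _ = z₀ • f := by rw [hcdef]; module
end

section
/- (Abstract Birman–Schwinger principle, resolvent direction) Under the Kato–Konno–Kuroda hypotheses, for z₀ ∈ ρ(H₀) one has: z₀ ∈ ρ(H) if and only if 1 ∈ ρ(K(z₀)). Moreover, I_K - closure(V₁R(z)V₂*) = [I_K - K(z)]⁻¹ for z ∈ {ζ ∈ ρ(H₀) : 1 ∈ ρ(K(ζ))}. -/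
private theorem resId_aux {E : Type*} [NormedAddCommGroup E] [Module ℂ E]
    (T : E →ₗ.[ℂ] E) (z ζ : ℂ) (Rz Rζ : E →L[ℂ] E)
    (hbwd : ∀ x : T.domain, Rz (T x - z • (x : E)) = (x : E))
    (hfwd : ∀ y : E, ∃ hy : Rζ y ∈ T.domain, T ⟨Rζ y, hy⟩ - ζ • Rζ y = y)
    (y : E) : Rζ y = Rz y + (ζ - z) • Rz (Rζ y) := by
  obtain ⟨hy, hEq⟩ := hfwd y
  have h2 : Rz (T ⟨Rζ y, hy⟩ - z • Rζ y) = Rζ y := hbwd ⟨Rζ y, hy⟩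
  have hT : T ⟨Rζ y, hy⟩ = y + ζ • Rζ y := by
    rw [sub_eq_iff_eq_add] at hEq; rw [hEq]
  rw [hT] at h2
  have harg : y + ζ • Rζ y - z • Rζ y = y + (ζ - z) • Rζ y := by
    rw [sub_smul]; abel
  rw [harg, map_add, map_smul] at h2
  exact h2.symm

private theorem comp_middle {F G G' : Type*}
    [NormedAddCommGroup F] [Module ℂ F] [NormedAddCommGroup G] [Module ℂ G]
    [NormedAddCommGroup G'] [Module ℂ G']
    (A : F →L[ℂ] G') (B : F →L[ℂ] F) (C : F →L[ℂ] F) (D : G →L[ℂ] F)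
    (h : B ∘L C = 1) : (A ∘L B) ∘L (C ∘L D) = A ∘L D := by
  ext x
  have hx := ContinuousLinearMap.ext_iff.mp h (D x)
  simp only [ContinuousLinearMap.comp_apply, ContinuousLinearMap.one_apply] at hx ⊢
  rw [hx]

/-- (Abstract Birman–Schwinger principle, resolvent direction.)
Under the Kato–Konno–Kuroda hypotheses, with `Hp` the operator `H` defined by the Kato
resolvent formula: for `z₀ ∈ ρ(H₀)`, one has `z₀ ∈ ρ(H)` if and only if
`1 ∈ ρ(K(z₀))`, i.e. iff `I - K(z₀)` is boundedly invertible.  Moreover,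
`I_K - closure(V₁ R(z) V₂*) = [I_K - K(z)]⁻¹` for all `z ∈ ρ(H₀)` with
`1 ∈ ρ(K(z))`, where `VRV z` denotes the bounded closure of `V₁ R(z) V₂*` and
`R(z) = R₀(z) - closure(R₀(z)V₂*)[I - K(z)]⁻¹ V₁R₀(z)`. -/
theorem birmanSchwinger_resolvent_direction
    {H K : Type*} [NormedAddCommGroup H] [InnerProductSpace ℂ H] [CompleteSpace H]
    [NormedAddCommGroup K] [InnerProductSpace ℂ K] [CompleteSpace K]
    (H₀ : H →ₗ.[ℂ] H) (hH₀dense : Dense (H₀.domain : Set H)) (hH₀closed : H₀.IsClosed)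
    (V₁ : H →ₗ.[ℂ] K) (hV₁dense : Dense (V₁.domain : Set H)) (hV₁closed : V₁.IsClosed)
    (V₂ : H →ₗ.[ℂ] K) (hV₂dense : Dense (V₂.domain : Set H)) (hV₂closed : V₂.IsClosed)
    (hdomV₁ : H₀.domain ≤ V₁.domain)
    (hdomV₂ : (LinearPMap.adjoint H₀).domain ≤ V₂.domain)
    (hV₂adjDense : Dense ((LinearPMap.adjoint V₂).domain : Set K))
    (ρ : Set ℂ) (R₀ : ℂ → H →L[ℂ] H)
    (hR₀ : ∀ z ∈ ρ,
      (∀ y : H, ∃ hy : R₀ z y ∈ H₀.domain, H₀ ⟨R₀ z y, hy⟩ - z • R₀ z y = y) ∧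
      (∀ x : H₀.domain, R₀ z (H₀ x - z • (x : H)) = (x : H)))
    (V₁R₀ : ℂ → H →L[ℂ] K)
    (hV₁R₀ : ∀ z ∈ ρ, ∀ (y : H) (hy : R₀ z y ∈ V₁.domain),
      V₁R₀ z y = V₁ ⟨R₀ z y, hy⟩)
    (RV₂ : ℂ → K →L[ℂ] H)
    (hRV₂ : ∀ z ∈ ρ, ∀ g : (LinearPMap.adjoint V₂).domain,
      RV₂ z (g : K) = R₀ z (LinearPMap.adjoint V₂ g))
    (BS : ℂ → K →L[ℂ] K)
    (hBS : ∀ z ∈ ρ, ∀ g : (LinearPMap.adjoint V₂).domain,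
      BS z (g : K) = -(V₁R₀ z (LinearPMap.adjoint V₂ g)))
    (hζ₀ : ∃ ζ₀ ∈ ρ, IsUnit ((1 : K →L[ℂ] K) - BS ζ₀))
    (Hp : H →ₗ.[ℂ] H) (hHpdense : Dense (Hp.domain : Set H)) (hHpclosed : Hp.IsClosed)
    (hHp : ∀ z ∈ ρ, ∀ W : K →L[ℂ] K,
      ((1 : K →L[ℂ] K) - BS z) ∘L W = 1 → W ∘L ((1 : K →L[ℂ] K) - BS z) = 1 →
      (∀ y : H, ∃ hy : (R₀ z - RV₂ z ∘L W ∘L V₁R₀ z) y ∈ Hp.domain,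
          Hp ⟨(R₀ z - RV₂ z ∘L W ∘L V₁R₀ z) y, hy⟩
            - z • (R₀ z - RV₂ z ∘L W ∘L V₁R₀ z) y = y) ∧
      (∀ x : Hp.domain, (R₀ z - RV₂ z ∘L W ∘L V₁R₀ z) (Hp x - z • (x : H)) = (x : H)))
    (VRV : ℂ → K →L[ℂ] K)
    (hVRV : ∀ z ∈ ρ, ∀ W : K →L[ℂ] K,
      ((1 : K →L[ℂ] K) - BS z) ∘L W = 1 → W ∘L ((1 : K →L[ℂ] K) - BS z) = 1 →
      ∀ (g : (LinearPMap.adjoint V₂).domain)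
        (h : (R₀ z - RV₂ z ∘L W ∘L V₁R₀ z) (LinearPMap.adjoint V₂ g) ∈ V₁.domain),
        VRV z (g : K) = V₁ ⟨(R₀ z - RV₂ z ∘L W ∘L V₁R₀ z) (LinearPMap.adjoint V₂ g), h⟩)
    (z₀ : ℂ) (hz₀ : z₀ ∈ ρ) :
    ((∃ Rz : H →L[ℂ] H,
        (∀ y : H, ∃ hy : Rz y ∈ Hp.domain, Hp ⟨Rz y, hy⟩ - z₀ • Rz y = y) ∧
        (∀ x : Hp.domain, Rz (Hp x - z₀ • (x : H)) = (x : H)))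
      ↔ IsUnit ((1 : K →L[ℂ] K) - BS z₀)) ∧
    (∀ z ∈ ρ, ∀ W : K →L[ℂ] K,
      ((1 : K →L[ℂ] K) - BS z) ∘L W = 1 → W ∘L ((1 : K →L[ℂ] K) - BS z) = 1 →
      (1 : K →L[ℂ] K) - VRV z = W) := by
  have hspan : Dense ((Submodule.span ℂ
      (((LinearPMap.adjoint V₂).domain : Submodule ℂ K) : Set K) : Submodule ℂ K) : Set K) := by
    rw [Submodule.span_eq]; exact hV₂adjDense
  have extK : ∀ f g : K →L[ℂ] K,
      (∀ x : (LinearPMap.adjoint V₂).domain, f (x : K) = g (x : K)) → f = g := by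
    intro f g hfg
    refine ContinuousLinearMap.ext_on hspan ?_
    intro x hx
    exact hfg ⟨x, hx⟩
  have memD : ∀ z ∈ ρ, ∀ y : H, R₀ z y ∈ H₀.domain := fun z hz y => ((hR₀ z hz).1 y).choose
  have memV : ∀ z ∈ ρ, ∀ y : H, R₀ z y ∈ V₁.domain := fun z hz y => hdomV₁ (memD z hz y)
  have hV₁R₀' : ∀ z, ∀ hz : z ∈ ρ, ∀ y : H, V₁R₀ z y = V₁ ⟨R₀ z y, memV z hz y⟩ :=
    fun z hz y => hV₁R₀ z hz y (memV z hz y)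
  have r1 : ∀ z ∈ ρ, ∀ w ∈ ρ, ∀ y : H, R₀ w y = R₀ z y + (w - z) • R₀ z (R₀ w y) :=
    fun z hz w hw y => resId_aux H₀ z w (R₀ z) (R₀ w) (hR₀ z hz).2 (hR₀ w hw).1 y
  have r1' : ∀ z ∈ ρ, ∀ w ∈ ρ, ∀ y : H, R₀ w y = R₀ z y + (w - z) • R₀ w (R₀ z y) := by
    intro z hz w hw y
    have h := r1 w hw z hz y
    linear_combination (norm := module) -h
  have e2 : ∀ z, ∀ hz : z ∈ ρ, ∀ w, ∀ hw : w ∈ ρ, ∀ y : H,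
      V₁R₀ w y = V₁R₀ z y + (w - z) • V₁R₀ z (R₀ w y) := by
    intro z hz w hw y
    have hy := r1 z hz w hw y
    have hsub : (⟨R₀ w y, memV w hw y⟩ : V₁.domain)
        = ⟨R₀ z y, memV z hz y⟩ + (w - z) • ⟨R₀ z (R₀ w y), memV z hz (R₀ w y)⟩ := by
      apply Subtype.ext
      simpa using hy
    rw [hV₁R₀' w hw y, hsub, V₁.map_add, V₁.map_smul, ← hV₁R₀' z hz y,
      ← hV₁R₀' z hz (R₀ w y)]
  have e2' : ∀ z, ∀ hz : z ∈ ρ, ∀ w, ∀ hw : w ∈ ρ, ∀ y : H,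
      V₁R₀ w y = V₁R₀ z y + (w - z) • V₁R₀ w (R₀ z y) := by
    intro z hz w hw y
    have hy := r1' z hz w hw y
    have hsub : (⟨R₀ w y, memV w hw y⟩ : V₁.domain)
        = ⟨R₀ z y, memV z hz y⟩ + (w - z) • ⟨R₀ w (R₀ z y), memV w hw (R₀ z y)⟩ := by
      apply Subtype.ext
      simpa using hy
    rw [hV₁R₀' w hw y, hsub, V₁.map_add, V₁.map_smul, ← hV₁R₀' z hz y,
      ← hV₁R₀' w hw (R₀ z y)]
  have pInv1 : ∀ S W' : K →L[ℂ] K, ((1 : K →L[ℂ] K) - S) ∘L W' = 1 →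
      ∀ x : K, W' x - S (W' x) = x := by
    intro S W' h x
    have h' := ContinuousLinearMap.ext_iff.mp h x
    simpa [ContinuousLinearMap.comp_apply, ContinuousLinearMap.sub_apply] using h'
  have pInv2 : ∀ S W' : K →L[ℂ] K, W' ∘L ((1 : K →L[ℂ] K) - S) = 1 →
      ∀ x : K, W' x - W' (S x) = x := by
    intro S W' h x
    have h' := ContinuousLinearMap.ext_iff.mp h x
    simpa [ContinuousLinearMap.comp_apply, ContinuousLinearMap.sub_apply, map_sub] using h'
  have graphFact : ∀ z, ∀ hz : z ∈ ρ, ∀ w : K,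
      ∃ hm : RV₂ z w ∈ V₁.domain, V₁ ⟨RV₂ z w, hm⟩ = -(BS z w) := by
    intro z hz w
    have hmaps : Set.MapsTo (fun u : K => (RV₂ z u, -(BS z u)))
        (((LinearPMap.adjoint V₂).domain : Submodule ℂ K) : Set K)
        (V₁.graph : Set (H × K)) := by
      intro x hx
      have h1 : RV₂ z x = R₀ z (LinearPMap.adjoint V₂ ⟨x, hx⟩) := hRV₂ z hz ⟨x, hx⟩
      have hmem : RV₂ z x ∈ V₁.domain := by rw [h1]; exact memV z hz _
      have hval : V₁ ⟨RV₂ z x, hmem⟩ = -(BS z x) := by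
        have h2 : BS z x = -(V₁R₀ z (LinearPMap.adjoint V₂ ⟨x, hx⟩)) := hBS z hz ⟨x, hx⟩
        have h3 : (⟨RV₂ z x, hmem⟩ : V₁.domain)
            = ⟨R₀ z (LinearPMap.adjoint V₂ ⟨x, hx⟩), memV z hz _⟩ := Subtype.ext h1
        rw [h3, ← hV₁R₀' z hz _, h2, neg_neg]
      show (RV₂ z x, -(BS z x)) ∈ V₁.graph
      rw [LinearPMap.mem_graph_iff]
      exact ⟨⟨RV₂ z x, hmem⟩, rfl, hval⟩
    have hw : w ∈ closure (((LinearPMap.adjoint V₂).domain : Submodule ℂ K) : Set K) := by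
      rw [hV₂adjDense.closure_eq]; trivial
    have hcont : Continuous fun u : K => (RV₂ z u, -(BS z u)) :=
      (RV₂ z).continuous.prodMk (BS z).continuous.neg
    have hmemG0 := map_mem_closure hcont hw hmaps
    rw [IsClosed.closure_eq hV₁closed] at hmemG0
    have hmemG : ((RV₂ z) w, -(BS z w)) ∈ V₁.graph := hmemG0
    rw [LinearPMap.mem_graph_iff] at hmemG
    obtain ⟨y, hy1, hy2⟩ := hmemG
    have hy1' : (y : H) = RV₂ z w := hy1
    have hy2' : V₁ y = -(BS z w) := hy2
    have hm : RV₂ z w ∈ V₁.domain := hy1' ▸ y.2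
    refine ⟨hm, ?_⟩
    have hsub : (⟨RV₂ z w, hm⟩ : V₁.domain) = y := Subtype.ext hy1'.symm
    rw [hsub, hy2']
  have part2 : ∀ z ∈ ρ, ∀ W : K →L[ℂ] K,
      ((1 : K →L[ℂ] K) - BS z) ∘L W = 1 → W ∘L ((1 : K →L[ℂ] K) - BS z) = 1 →
      (1 : K →L[ℂ] K) - VRV z = W := by
    intro z hz W hW1 hW2
    apply extK
    intro g
    have ha : (R₀ z - RV₂ z ∘L W ∘L V₁R₀ z) (LinearPMap.adjoint V₂ g)
        = RV₂ z (W (g : K)) := by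
      have h1 : V₁R₀ z (LinearPMap.adjoint V₂ g) = -(BS z (g : K)) := by
        rw [hBS z hz g, neg_neg]
      have h2 := congrArg (RV₂ z) (pInv2 (BS z) W hW2 (g : K))
      simp only [map_sub] at h2
      have h3 : RV₂ z (g : K) = R₀ z (LinearPMap.adjoint V₂ g) := hRV₂ z hz g
      simp only [ContinuousLinearMap.sub_apply, ContinuousLinearMap.comp_apply, h1, map_neg]
      linear_combination (norm := module) -h2 - h3
    obtain ⟨hm, hval⟩ := graphFact z hz (W (g : K))
    have hmem' : (R₀ z - RV₂ z ∘L W ∘L V₁R₀ z) (LinearPMap.adjoint V₂ g) ∈ V₁.domain := by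
      rw [ha]; exact hm
    have hv := hVRV z hz W hW1 hW2 g hmem'
    have hsub : (⟨(R₀ z - RV₂ z ∘L W ∘L V₁R₀ z) (LinearPMap.adjoint V₂ g), hmem'⟩ : V₁.domain)
        = ⟨RV₂ z (W (g : K)), hm⟩ := Subtype.ext ha
    rw [hsub, hval] at hv
    have h4 := pInv1 (BS z) W hW1 (g : K)
    simp only [ContinuousLinearMap.sub_apply, ContinuousLinearMap.one_apply, hv]
    linear_combination (norm := module) -h4
  refine ⟨⟨?_, ?_⟩, part2⟩
  · -- forward direction
    rintro ⟨Rz, hfwdz, hbwdz⟩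
    obtain ⟨ζ, hζ, hUζ⟩ := hζ₀
    obtain ⟨u, hu⟩ := hUζ
    set W₀ : K →L[ℂ] K := (↑u⁻¹ : K →L[ℂ] K) with hW₀def
    have hW₀1 : ((1 : K →L[ℂ] K) - BS ζ) ∘L W₀ = 1 := by
      rw [hW₀def, ← ContinuousLinearMap.mul_def, ← hu]; exact u.mul_inv
    have hW₀2 : W₀ ∘L ((1 : K →L[ℂ] K) - BS ζ) = 1 := by
      rw [hW₀def, ← ContinuousLinearMap.mul_def, ← hu]; exact u.inv_mul
    set Rζop : H →L[ℂ] H := R₀ ζ - RV₂ ζ ∘L W₀ ∘L V₁R₀ ζ with hRζdef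
    have hRζ := hHp ζ hζ W₀ hW₀1 hW₀2
    have p1 : ∀ y : H, R₀ z₀ y = R₀ ζ y + (z₀ - ζ) • R₀ ζ (R₀ z₀ y) := r1 ζ hζ z₀ hz₀
    have p2 : ∀ y : H, R₀ z₀ y = R₀ ζ y + (z₀ - ζ) • R₀ z₀ (R₀ ζ y) := r1' ζ hζ z₀ hz₀
    have p3 : ∀ y : H, Rz y = Rζop y + (z₀ - ζ) • Rζop (Rz y) :=
      resId_aux Hp ζ z₀ Rζop Rz hRζ.2 hfwdz
    have p4 : ∀ y : H, Rz y = Rζop y + (z₀ - ζ) • Rz (Rζop y) := by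
      intro y
      have h := resId_aux Hp z₀ ζ Rz Rζop hbwdz hRζ.1 y
      linear_combination (norm := module) -h
    have p5 : ∀ y : H, V₁R₀ z₀ y = V₁R₀ ζ y + (z₀ - ζ) • V₁R₀ ζ (R₀ z₀ y) := e2 ζ hζ z₀ hz₀
    have p5' : ∀ y : H, V₁R₀ z₀ y = V₁R₀ ζ y + (z₀ - ζ) • V₁R₀ z₀ (R₀ ζ y) := e2' ζ hζ z₀ hz₀
    have p6 : BS z₀ = BS ζ - (z₀ - ζ) • (V₁R₀ z₀ ∘L RV₂ ζ) := by
      apply extK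
      intro g
      have h1 : BS z₀ (g : K) = -(V₁R₀ z₀ (LinearPMap.adjoint V₂ g)) := hBS z₀ hz₀ g
      have h2 : BS ζ (g : K) = -(V₁R₀ ζ (LinearPMap.adjoint V₂ g)) := hBS ζ hζ g
      have h3 : RV₂ ζ (g : K) = R₀ ζ (LinearPMap.adjoint V₂ g) := hRV₂ ζ hζ g
      have h4 := p5' (LinearPMap.adjoint V₂ g)
      have h5 := congrArg (V₁R₀ z₀) h3
      simp only [ContinuousLinearMap.sub_apply, ContinuousLinearMap.smul_apply,
        ContinuousLinearMap.comp_apply, h1, h2]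
      linear_combination (norm := module) -h4 + (z₀ - ζ) • h5
    set U : K →L[ℂ] H := RV₂ ζ with hUdef
    set Vv : H →L[ℂ] K := (z₀ - ζ) • (W₀ ∘L V₁R₀ z₀) with hVdef
    set Q : H →L[ℂ] H := (1 - (z₀ - ζ) • R₀ ζ) ∘L (1 + (z₀ - ζ) • Rz) with hQdef
    have F1 : (1 : H →L[ℂ] H) + U ∘L Vv = (1 - (z₀ - ζ) • Rζop) ∘L (1 + (z₀ - ζ) • R₀ z₀) := by
      ext y
      have hA := congrArg (fun t => RV₂ ζ (W₀ t)) (p5 y)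
      simp only [map_add, map_smul] at hA
      have hp1 := p1 y
      simp only [hUdef, hVdef, hRζdef, ContinuousLinearMap.add_apply,
        ContinuousLinearMap.sub_apply, ContinuousLinearMap.comp_apply,
        ContinuousLinearMap.smul_apply, ContinuousLinearMap.one_apply, map_add, map_smul,
        map_sub]
      linear_combination (norm := module) (z₀ - ζ) • hA - (z₀ - ζ) • hp1
    have M2 : ((1 : H →L[ℂ] H) - (z₀ - ζ) • R₀ ζ) ∘L (1 + (z₀ - ζ) • R₀ z₀) = 1 := by
      ext y
      have hp1 := p1 y
      simp only [ContinuousLinearMap.comp_apply, ContinuousLinearMap.add_apply,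
        ContinuousLinearMap.sub_apply, ContinuousLinearMap.smul_apply,
        ContinuousLinearMap.one_apply, map_add, map_smul]
      linear_combination (norm := module) (z₀ - ζ) • hp1
    have M1 : ((1 : H →L[ℂ] H) + (z₀ - ζ) • R₀ z₀) ∘L (1 - (z₀ - ζ) • R₀ ζ) = 1 := by
      ext y
      have hp2 := p2 y
      simp only [ContinuousLinearMap.comp_apply, ContinuousLinearMap.add_apply,
        ContinuousLinearMap.sub_apply, ContinuousLinearMap.smul_apply,
        ContinuousLinearMap.one_apply, map_add, map_smul, map_sub]
      linear_combination (norm := module) (z₀ - ζ) • hp2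
    have M3 : ((1 : H →L[ℂ] H) - (z₀ - ζ) • Rζop) ∘L (1 + (z₀ - ζ) • Rz) = 1 := by
      ext y
      have hp3 := p3 y
      simp only [ContinuousLinearMap.comp_apply, ContinuousLinearMap.add_apply,
        ContinuousLinearMap.sub_apply, ContinuousLinearMap.smul_apply,
        ContinuousLinearMap.one_apply, map_add, map_smul]
      linear_combination (norm := module) (z₀ - ζ) • hp3
    have M4 : ((1 : H →L[ℂ] H) + (z₀ - ζ) • Rz) ∘L (1 - (z₀ - ζ) • Rζop) = 1 := by
      ext y
      have hp4 := p4 y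
      simp only [ContinuousLinearMap.comp_apply, ContinuousLinearMap.add_apply,
        ContinuousLinearMap.sub_apply, ContinuousLinearMap.smul_apply,
        ContinuousLinearMap.one_apply, map_add, map_smul, map_sub]
      linear_combination (norm := module) (z₀ - ζ) • hp4
    have GQ : ((1 : H →L[ℂ] H) + U ∘L Vv) ∘L Q = 1 := by
      rw [F1, hQdef, comp_middle _ _ _ _ M1]
      exact M3
    have QG : Q ∘L ((1 : H →L[ℂ] H) + U ∘L Vv) = 1 := by
      rw [F1, hQdef, comp_middle _ _ _ _ M4]
      exact M2
    have h5 : ((1 : K →L[ℂ] K) + Vv ∘L U) ∘L (1 - Vv ∘L Q ∘L U) = 1 := by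
      ext g
      have hGQ := ContinuousLinearMap.ext_iff.mp GQ (U g)
      simp only [ContinuousLinearMap.comp_apply, ContinuousLinearMap.add_apply,
        ContinuousLinearMap.one_apply] at hGQ
      have hGQ' := congrArg Vv hGQ
      simp only [map_add] at hGQ'
      simp only [ContinuousLinearMap.comp_apply, ContinuousLinearMap.add_apply,
        ContinuousLinearMap.sub_apply, ContinuousLinearMap.one_apply, map_sub, map_add]
      linear_combination (norm := module) -hGQ'
    have h6 : ((1 : K →L[ℂ] K) - Vv ∘L Q ∘L U) ∘L (1 + Vv ∘L U) = 1 := by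
      ext g
      have hQG := ContinuousLinearMap.ext_iff.mp QG (U g)
      simp only [ContinuousLinearMap.comp_apply, ContinuousLinearMap.add_apply,
        ContinuousLinearMap.one_apply, map_add] at hQG
      have hQG' := congrArg Vv hQG
      simp only [map_add] at hQG'
      simp only [ContinuousLinearMap.comp_apply, ContinuousLinearMap.add_apply,
        ContinuousLinearMap.sub_apply, ContinuousLinearMap.one_apply, map_sub, map_add]
      linear_combination (norm := module) -hQG'
    have F4 : (1 : K →L[ℂ] K) - BS z₀ = ((1 : K →L[ℂ] K) - BS ζ) ∘L (1 + Vv ∘L U) := by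
      ext g
      have hp6 := ContinuousLinearMap.ext_iff.mp p6 g
      simp only [ContinuousLinearMap.sub_apply, ContinuousLinearMap.smul_apply,
        ContinuousLinearMap.comp_apply] at hp6
      have hpw := pInv1 (BS ζ) W₀ hW₀1 (V₁R₀ z₀ (RV₂ ζ g))
      simp only [hVdef, hUdef, ContinuousLinearMap.comp_apply, ContinuousLinearMap.add_apply,
        ContinuousLinearMap.sub_apply, ContinuousLinearMap.smul_apply,
        ContinuousLinearMap.one_apply, map_add, map_smul]
      linear_combination (norm := module) -hp6 - (z₀ - ζ) • hpw
    refine ⟨⟨(1 : K →L[ℂ] K) - BS z₀, (1 - Vv ∘L Q ∘L U) ∘L W₀, ?_, ?_⟩, rfl⟩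
    · show ((1 : K →L[ℂ] K) - BS z₀) * ((1 - Vv ∘L Q ∘L U) ∘L W₀) = 1
      rw [ContinuousLinearMap.mul_def, F4, comp_middle _ _ _ _ h5]
      exact hW₀1
    · show ((1 - Vv ∘L Q ∘L U) ∘L W₀) * ((1 : K →L[ℂ] K) - BS z₀) = 1
      rw [ContinuousLinearMap.mul_def, F4, comp_middle _ _ _ _ hW₀2]
      exact h6
  · -- backward direction
    intro hU
    obtain ⟨u, hu⟩ := hU
    have hW1 : ((1 : K →L[ℂ] K) - BS z₀) ∘L (↑u⁻¹ : K →L[ℂ] K) = 1 := by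
      rw [← ContinuousLinearMap.mul_def, ← hu]; exact u.mul_inv
    have hW2 : (↑u⁻¹ : K →L[ℂ] K) ∘L ((1 : K →L[ℂ] K) - BS z₀) = 1 := by
      rw [← ContinuousLinearMap.mul_def, ← hu]; exact u.inv_mul
    exact ⟨_, (hHp z₀ hz₀ _ hW1 hW2).1, (hHp z₀ hz₀ _ hW1 hW2).2⟩
end
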